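/- arXiv:1509.06951 — 3 statements merged into one kernel-verified Lean document; each statement's English description precedes it below -/
import Mathlib

section
/- Let L be a finite-dimensional Lie algebra and suppose the chief factors A/B and C/D of L are m-related. Then A/B and C/D are L-connected; in particular, if neither case involves a primitive epimorphic image of type 3 with non-isomorphic minimal ideals, they are L-isomorphic (isomorphic as Lie algebras and as L-modules). -/
section ChiefFactors

variable (K : Type*) (L : Type*) [Field K] [LieRing L] [LieAlgebra K L]

/-- `A/B` is a chief factor of `L`: `B` is an ideal and `A/B` is a minimal ideal of `L/B`,
i.e. `B < A` and there is no ideal strictly between `B` and `A`. -/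
def IsChiefFactor (A B : LieIdeal K L) : Prop :=
  B < A ∧ ∀ C : LieIdeal K L, B < C → C ≤ A → C = A

/-- The factor `A/B` is abelian. -/
def FactorAbelian (A B : LieIdeal K L) : Prop :=
  ∀ a ∈ A, ∀ a' ∈ A, ⁅a, a'⁆ ∈ B

/-- `M` is a maximal (proper) subalgebra of `L`. -/
def IsMaximalSubalgebra (M : LieSubalgebra K L) : Prop :=
  M ≠ ⊤ ∧ ∀ N : LieSubalgebra K L, M < N → N = ⊤

/-- `L = A + M`. -/
def SumIsTop (A : LieIdeal K L) (M : LieSubalgebra K L) : Prop :=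
  ∀ x : L, ∃ a ∈ A, ∃ m ∈ M, x = a + m

/-- `M` supplements the factor `A/B` : `L = A + M` and `B ⊆ A ∩ M`. -/
def Supplements (M : LieSubalgebra K L) (A B : LieIdeal K L) : Prop :=
  SumIsTop K L A M ∧ B ≤ A ∧ (B : Set L) ⊆ M

/-- `M` complements the factor `A/B` : `L = A + M` and `A ∩ M = B`. -/
def Complements (M : LieSubalgebra K L) (A B : LieIdeal K L) : Prop :=
  SumIsTop K L A M ∧ (A : Set L) ∩ M = B

/-- `A/B` is a supplemented chief factor (supplemented by a maximal subalgebra). -/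
def SupplementedFactor (A B : LieIdeal K L) : Prop :=
  ∃ M : LieSubalgebra K L, IsMaximalSubalgebra K L M ∧ Supplements K L M A B

/-- `A/B` is a Frattini chief factor: `A/B ⊆ φ(L/B)`, equivalently `A` is contained in
every maximal subalgebra of `L` containing `B`. -/
def FrattiniFactor (A B : LieIdeal K L) : Prop :=
  IsChiefFactor K L A B ∧
    ∀ M : LieSubalgebra K L, IsMaximalSubalgebra K L M → (B : Set L) ⊆ M → (A : Set L) ⊆ M

/-- `A/B ↘ C/D` : `A = B + C` and `B ∩ C = D`. -/
def Searrow (A B C D : LieIdeal K L) : Prop := A = B ⊔ C ∧ B ⊓ C = D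

/-- `[A/B ↘ C/D]` is an m-crossing. -/
def MCrossing (A B C D : LieIdeal K L) : Prop :=
  IsChiefFactor K L A B ∧ IsChiefFactor K L C D ∧ Searrow K L A B C D ∧
    FrattiniFactor K L A B ∧ SupplementedFactor K L C D

/-- The chief factors `A/B` and `C/D` are m-related. -/
def MRelated (A B C D : LieIdeal K L) : Prop :=
  (∃ R S, IsChiefFactor K L R S ∧ SupplementedFactor K L R S ∧
     Searrow K L R S A B ∧ Searrow K L R S C D) ∨
  (∃ U V W X, MCrossing K L U V W X ∧ Searrow K L V X A B ∧ Searrow K L W X C D) ∨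
  (∃ Y Z, FrattiniFactor K L Y Z ∧ Searrow K L A B Y Z ∧ Searrow K L C D Y Z) ∨
  (∃ U V W X, MCrossing K L U V W X ∧ Searrow K L A B U V ∧ Searrow K L C D U W)

/-- `I` is the core `M_L` of the subalgebra `M`: the largest ideal of `L` contained in `M`. -/
def IsCoreOf (I : LieIdeal K L) (M : LieSubalgebra K L) : Prop :=
  (I : Set L) ⊆ M ∧ ∀ J : LieIdeal K L, (J : Set L) ⊆ M → J ≤ I

/-- The quotient `L/I` is primitive: it has a core-free maximal subalgebra. -/
def QuotPrimitive (I : LieIdeal K L) : Prop :=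
  ∃ M : LieSubalgebra K L, IsMaximalSubalgebra K L M ∧ IsCoreOf K L I M

/-- The quotient `L/I` is monolithic: it has a unique minimal ideal. -/
def QuotMonolithic (I : LieIdeal K L) : Prop :=
  ∃! J : LieIdeal K L, IsChiefFactor K L J I

/-- `M` is a monolithic maximal subalgebra supplementing `A/B` :
`L/M_L` is a monolithic primitive Lie algebra. -/
def MonolithicSupplement (M : LieSubalgebra K L) (A B : LieIdeal K L) : Prop :=
  IsMaximalSubalgebra K L M ∧ Supplements K L M A B ∧
    ∃ I : LieIdeal K L, IsCoreOf K L I M ∧ QuotMonolithic K L I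

/-- `A/B` and `C/D` are `L`-isomorphic: there is an isomorphism of `L`-modules between
the factors which moreover preserves the induced Lie brackets. -/
def LIso (A B C D : LieIdeal K L) : Prop :=
  B ≤ A ∧ D ≤ C ∧
  ∃ e : (A ⧸ (LieSubmodule.comap (LieSubmodule.incl A) B)) ≃ₗ⁅K,L⁆
        (C ⧸ (LieSubmodule.comap (LieSubmodule.incl C) D)),
    ∀ (a a' : A) (c c' : C),
      e (LieSubmodule.Quotient.mk a) = LieSubmodule.Quotient.mk c →
      e (LieSubmodule.Quotient.mk a') = LieSubmodule.Quotient.mk c' →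
      e (LieSubmodule.Quotient.mk ⟨⁅(a : L), (a' : L)⁆, A.lie_mem a'.2⟩) =
        LieSubmodule.Quotient.mk ⟨⁅(c : L), (c' : L)⁆, C.lie_mem c'.2⟩

/-- `L/I` is a primitive Lie algebra of type 3 with (exactly two) minimal ideals
`J1/I` and `J2/I`, both non-abelian. -/
def QuotPrimitiveType3 (I J1 J2 : LieIdeal K L) : Prop :=
  QuotPrimitive K L I ∧ J1 ≠ J2 ∧ IsChiefFactor K L J1 I ∧ IsChiefFactor K L J2 I ∧
    ¬ FactorAbelian K L J1 I ∧ ¬ FactorAbelian K L J2 I ∧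
    ∀ J : LieIdeal K L, IsChiefFactor K L J I → J = J1 ∨ J = J2

/-- `A/B` and `C/D` are `L`-connected. -/
def LConnected (A B C D : LieIdeal K L) : Prop :=
  LIso K L A B C D ∨
    ∃ I J1 J2 : LieIdeal K L, QuotPrimitiveType3 K L I J1 J2 ∧
      LIso K L J1 I A B ∧ LIso K L J2 I C D

end ChiefFactors

variable {K : Type*} {L : Type*} [Field K] [LieRing L] [LieAlgebra K L]
variable [FiniteDimensional K L]
section Helpers

variable {K : Type*} {L : Type*} [Field K] [LieRing L] [LieAlgebra K L]

lemma mk_eq_mk_iff (A B : LieIdeal K L) (a c : A) :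
    (LieSubmodule.Quotient.mk (N := LieSubmodule.comap (LieSubmodule.incl A) B) a =
     LieSubmodule.Quotient.mk c) ↔ ((a : L) - c ∈ B) := by
  rw [Submodule.Quotient.eq]
  exact LieSubmodule.mem_comap (f := LieSubmodule.incl A) (N' := B) (m := a - c)

lemma lie_sub_lie_mem (B : LieIdeal K L) (a a' c c' : L)
    (h1 : a - c ∈ B) (h2 : a' - c' ∈ B) : ⁅a, a'⁆ - ⁅c, c'⁆ ∈ B := by
  have key : ⁅a, a'⁆ - ⁅c, c'⁆ = ⁅a - c, a'⁆ + ⁅c, a' - c'⁆ := by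
    rw [sub_lie, lie_sub]; abel
  rw [key]
  exact B.add_mem (lie_mem_left K L B _ _ h1) (lie_mem_right K L B _ _ h2)

lemma liso_refl (A B : LieIdeal K L) (h : B ≤ A) : LIso K L A B A B := by
  refine ⟨h, h, LieModuleEquiv.refl, ?_⟩
  intro a a' c c' h1 h2
  simp only [LieModuleEquiv.refl_apply] at h1 h2 ⊢
  rw [mk_eq_mk_iff] at h1 h2 ⊢
  exact lie_sub_lie_mem B _ _ _ _ h1 h2

end Helpers
section Helpers2

variable {K : Type*} {L : Type*} [Field K] [LieRing L] [LieAlgebra K L]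

lemma liso_symm {A B C D : LieIdeal K L} (h : LIso K L A B C D) : LIso K L C D A B := by
  obtain ⟨hBA, hDC, e, hcond⟩ := h
  refine ⟨hDC, hBA, e.symm, ?_⟩
  intro c c' a a' h1 h2
  have h1' : e (LieSubmodule.Quotient.mk a) = LieSubmodule.Quotient.mk c := by
    rw [← h1]; exact (e.apply_symm_apply _)
  have h2' : e (LieSubmodule.Quotient.mk a') = LieSubmodule.Quotient.mk c' := by
    rw [← h2]; exact (e.apply_symm_apply _)
  have := hcond a a' c c' h1' h2'
  rw [← this]; exact (e.symm_apply_apply _)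

lemma liso_trans {A B C D E F : LieIdeal K L} (h1 : LIso K L A B C D)
    (h2 : LIso K L C D E F) : LIso K L A B E F := by
  obtain ⟨hBA, hDC, e1, hc1⟩ := h1
  obtain ⟨-, hFE, e2, hc2⟩ := h2
  refine ⟨hBA, hFE, e1.trans e2, ?_⟩
  intro a a' g g' hg hg'
  obtain ⟨c, hc⟩ := Submodule.Quotient.mk_surjective _ (e1 (LieSubmodule.Quotient.mk a))
  obtain ⟨c', hc'⟩ := Submodule.Quotient.mk_surjective _ (e1 (LieSubmodule.Quotient.mk a'))
  have hg2 : e2 (LieSubmodule.Quotient.mk c) = LieSubmodule.Quotient.mk g := by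
    rw [show (LieSubmodule.Quotient.mk (N := LieSubmodule.comap (LieSubmodule.incl C) D) c) =
      e1 (LieSubmodule.Quotient.mk a) from hc]
    exact hg
  have hg2' : e2 (LieSubmodule.Quotient.mk c') = LieSubmodule.Quotient.mk g' := by
    rw [show (LieSubmodule.Quotient.mk (N := LieSubmodule.comap (LieSubmodule.incl C) D) c') =
      e1 (LieSubmodule.Quotient.mk a') from hc']
    exact hg'
  have key1 := hc1 a a' c c' hc.symm hc'.symm
  have key2 := hc2 c c' g g' hg2 hg2'
  show e2 (e1 _) = _
  rw [key1, key2]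

end Helpers2
section SecondIso

variable {K : Type*} {L : Type*} [Field K] [LieRing L] [LieAlgebra K L]

/-- Second isomorphism theorem packaged as `LIso`: `S/(Q⊓S) ≅ (Q⊔S)/Q`. -/
lemma liso_second (Q S : LieIdeal K L) : LIso K L S (Q ⊓ S) (Q ⊔ S) Q := by
  have hSP : S ≤ Q ⊔ S := le_sup_right
  set T' : LieSubmodule K L S := LieSubmodule.comap (LieSubmodule.incl S) (Q ⊓ S) with hT'
  set Q' : LieSubmodule K L (Q ⊔ S : LieIdeal K L) :=
    LieSubmodule.comap (LieSubmodule.incl (Q ⊔ S)) Q with hQ'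
  set f : S →ₗ⁅K,L⁆ ((Q ⊔ S : LieIdeal K L) ⧸ Q') :=
    (LieSubmodule.Quotient.mk' Q').comp (LieSubmodule.inclusion hSP) with hf
  have hfapp : ∀ s : S, f s = LieSubmodule.Quotient.mk (N := Q') ⟨(s : L), hSP s.2⟩ := by
    intro s; rfl
  have hker : T'.toSubmodule ≤ LinearMap.ker (f : S →ₗ[K] ((Q ⊔ S : LieIdeal K L) ⧸ Q')) := by
    intro s hs
    have hsT : (s : L) ∈ Q ⊓ S := hs
    simp only [LinearMap.mem_ker]
    show f s = 0
    rw [hfapp, LieSubmodule.Quotient.mk_eq_zero']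
    exact hsT.1
  set fbar : (S ⧸ T') →ₗ[K] ((Q ⊔ S : LieIdeal K L) ⧸ Q') :=
    Submodule.liftQ T'.toSubmodule (f : S →ₗ[K] ((Q ⊔ S : LieIdeal K L) ⧸ Q')) hker with hfbar
  have hfbarmk : ∀ s : S, fbar (LieSubmodule.Quotient.mk (N := T') s) = f s := by
    intro s; rfl
  have hinj : Function.Injective fbar := by
    rw [← LinearMap.ker_eq_bot]
    apply Submodule.ker_liftQ_eq_bot
    intro s hs
    simp only [LinearMap.mem_ker] at hs
    have : f s = 0 := hs
    rw [hfapp, LieSubmodule.Quotient.mk_eq_zero'] at this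
    exact (LieSubmodule.mem_comap).2 (⟨this, s.2⟩ : (s : L) ∈ Q ⊓ S)
  have hsurj : Function.Surjective fbar := by
    intro y
    obtain ⟨p, hp⟩ := LieSubmodule.Quotient.surjective_mk' (N := Q') y
    obtain ⟨q, hq, s, hs, hqs⟩ := (LieSubmodule.mem_sup _ _ _).1 p.2
    refine ⟨LieSubmodule.Quotient.mk (N := T') ⟨s, hs⟩, ?_⟩
    rw [hfbarmk, hfapp, ← hp]
    show LieSubmodule.Quotient.mk _ = LieSubmodule.Quotient.mk p
    rw [Submodule.Quotient.eq]
    have hmem : ((s : L) - p) ∈ Q := by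
      rw [show (s : L) - p = -q by rw [← hqs]; abel]
      exact Q.neg_mem hq
    exact (LieSubmodule.mem_comap).2
      (by rwa [show ((LieSubmodule.incl (Q ⊔ S)) ((⟨s, hSP hs⟩ : (Q ⊔ S : LieIdeal K L)) - p) : L)
        = (s : L) - p from rfl])
  set elin := LinearEquiv.ofBijective fbar ⟨hinj, hsurj⟩ with helin
  have hmaplie : ∀ (x : L) (m : S ⧸ T'), fbar ⁅x, m⁆ = ⁅x, fbar m⁆ := by
    intro x m
    obtain ⟨s, rfl⟩ := LieSubmodule.Quotient.surjective_mk' (N := T') m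
    have h1 : ⁅x, LieSubmodule.Quotient.mk' T' s⁆ = LieSubmodule.Quotient.mk' T' ⁅x, s⁆ :=
      ((LieSubmodule.Quotient.mk' T').map_lie x s).symm
    rw [h1]
    have h2 : ∀ t : S, fbar (LieSubmodule.Quotient.mk' T' t) = f t := fun t => rfl
    rw [h2, h2, f.map_lie]
  set eqv : (S ⧸ T') ≃ₗ⁅K,L⁆ ((Q ⊔ S : LieIdeal K L) ⧸ Q') :=
    { elin with map_lie' := by intro x m; exact hmaplie x m } with heqv
  refine ⟨inf_le_right, le_sup_left, eqv, ?_⟩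
  intro a a' c c' h1 h2
  have hmkiff : ∀ (u v : (Q ⊔ S : LieIdeal K L)),
      (LieSubmodule.Quotient.mk (N := Q') u = LieSubmodule.Quotient.mk v) ↔ ((u : L) - v ∈ Q) :=
    fun u v => mk_eq_mk_iff (Q ⊔ S) Q u v
  have happ : ∀ s : S, eqv (LieSubmodule.Quotient.mk (N := T') s) =
      LieSubmodule.Quotient.mk (N := Q') ⟨(s : L), hSP s.2⟩ := fun s => rfl
  rw [happ] at h1 h2
  rw [happ]
  have hm1 : (a : L) - c ∈ Q := (hmkiff _ _).1 h1
  have hm2 : (a' : L) - c' ∈ Q := (hmkiff _ _).1 h2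
  exact (hmkiff _ _).2 (lie_sub_lie_mem Q _ _ _ _ hm1 hm2)

end SecondIso
section Lattice

variable {K : Type*} {L : Type*} [Field K] [LieRing L] [LieAlgebra K L]

lemma liso_searrow {P Q S T : LieIdeal K L} (h1 : P = Q ⊔ S) (h2 : Q ⊓ S = T) :
    LIso K L S T P Q := by
  subst h1; rw [← h2]; exact liso_second Q S

lemma chief_searrow_iff {P Q S T : LieIdeal K L} (h1 : P = Q ⊔ S) (h2 : Q ⊓ S = T) :
    IsChiefFactor K L P Q ↔ IsChiefFactor K L S T := by
  subst h1
  have hTQ : T ≤ Q := h2 ▸ inf_le_left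
  have hTS : T ≤ S := h2 ▸ inf_le_right
  constructor
  · rintro ⟨hlt, hmax⟩
    have hTS' : T < S := by
      refine lt_of_le_of_ne hTS ?_
      rintro rfl
      apply hlt.ne
      exact (sup_eq_left.2 hTQ).symm
    refine ⟨hTS', ?_⟩
    intro C hTC hCS
    have hQC : Q < Q ⊔ C := by
      refine lt_of_le_of_ne le_sup_left ?_
      intro h
      have hCQ : C ≤ Q := by
        conv_rhs => rw [h]
        exact le_sup_right
      exact hTC.not_ge (h2 ▸ le_inf hCQ hCS)
    have hQCS := hmax (Q ⊔ C) hQC (sup_le_sup_left hCS _)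
    have : S = C := by
      calc S = (Q ⊔ S) ⊓ S := (inf_eq_right.2 le_sup_right).symm
        _ = (Q ⊔ C) ⊓ S := by rw [hQCS]
        _ = (C ⊔ Q) ⊓ S := by rw [sup_comm Q C]
        _ = C ⊔ (Q ⊓ S) := sup_inf_assoc_of_le Q hCS
        _ = C ⊔ T := by rw [h2]
        _ = C := sup_eq_left.2 hTC.le
    exact this.symm
  · rintro ⟨hTS', hmax⟩
    have hlt : Q < Q ⊔ S := by
      refine lt_of_le_of_ne le_sup_left ?_
      intro h
      have hSQ : S ≤ Q := by
        conv_rhs => rw [h]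
        exact le_sup_right
      exact hTS'.not_ge (h2 ▸ le_inf hSQ le_rfl)
    refine ⟨hlt, ?_⟩
    intro C hQC hCQS
    by_cases hcs : C ⊓ S = T
    · exfalso
      have hQleC : Q ≤ C := hQC.le
      have : C = Q := by
        calc C = C ⊓ (Q ⊔ S) := (inf_eq_left.2 hCQS).symm
          _ = (Q ⊔ S) ⊓ C := inf_comm _ _
          _ = Q ⊔ (S ⊓ C) := sup_inf_assoc_of_le S hQleC
          _ = Q ⊔ (C ⊓ S) := by rw [inf_comm S C]
          _ = Q ⊔ T := by rw [hcs]
          _ = Q := sup_eq_left.2 hTQ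
      exact hQC.ne this.symm
    · have hlt2 : T < C ⊓ S := lt_of_le_of_ne (le_inf (hTQ.trans hQC.le) hTS) (fun h => hcs h.symm)
      have hCSS := hmax (C ⊓ S) hlt2 inf_le_right
      have hSC : S ≤ C := by rw [← hCSS]; exact inf_le_left
      exact le_antisymm hCQS (sup_le hQC.le hSC)

end Lattice
section CoreSum

variable {K : Type*} {L : Type*} [Field K] [LieRing L] [LieAlgebra K L]

lemma core_exists (M : LieSubalgebra K L) : ∃ R : LieIdeal K L, IsCoreOf K L R M := by
  refine ⟨sSup {J : LieIdeal K L | (J : Set L) ⊆ M}, ?_, ?_⟩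
  · intro x hx
    have hx' : x ∈ (sSup {J : LieIdeal K L | (J : Set L) ⊆ M} : LieSubmodule K L L).toSubmodule :=
      hx
    rw [LieSubmodule.sSup_toSubmodule] at hx'
    have hle : sSup {(J : Submodule K L) | J ∈ {J : LieIdeal K L | (J : Set L) ⊆ M}}
        ≤ M.toSubmodule := by
      apply sSup_le
      rintro p ⟨J, hJ, rfl⟩
      intro y hy
      exact hJ hy
    exact hle hx'
  · intro J hJ
    exact le_sSup hJ

lemma top_of_sum_subset {N : LieIdeal K L} {M : LieSubalgebra K L}
    (hsum : SumIsTop K L N M) (h : (N : Set L) ⊆ M) (x : L) : x ∈ M := by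
  obtain ⟨a, ha, m, hm, rfl⟩ := hsum x
  exact M.add_mem (h ha) hm

lemma sumIsTop_of_not_subset {N : LieIdeal K L} {M : LieSubalgebra K L}
    (hM : IsMaximalSubalgebra K L M) (h : ¬ (N : Set L) ⊆ M) : SumIsTop K L N M := by
  set p : Submodule K L := N.toSubmodule ⊔ M.toSubmodule with hp
  have hmem : ∀ z ∈ p, ∃ a ∈ N, ∃ m ∈ M, z = a + m := by
    intro z hz
    obtain ⟨a, ha, m, hm, hsum⟩ := Submodule.mem_sup.1 hz
    exact ⟨a, ha, m, hm, hsum.symm⟩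
  set N' : LieSubalgebra K L :=
    { p with
      lie_mem' := by
        intro x y hx hy
        obtain ⟨a, ha, m, hm, rfl⟩ := hmem x hx
        obtain ⟨a', ha', m', hm', rfl⟩ := hmem y hy
        have key : ⁅a + m, a' + m'⁆ = (⁅a, a'⁆ + ⁅a, m'⁆ + ⁅m, a'⁆) + ⁅m, m'⁆ := by
          rw [add_lie, lie_add, lie_add]; abel
        rw [key]
        refine Submodule.add_mem _ (Submodule.mem_sup_left ?_) (Submodule.mem_sup_right ?_)
        · exact N.add_mem (N.add_mem (lie_mem_left K L N _ _ ha) (lie_mem_left K L N _ _ ha))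
            (lie_mem_right K L N _ _ ha')
        · exact M.lie_mem hm hm' } with hN'
  have hMN' : M < N' := by
    rw [SetLike.lt_iff_le_and_exists]
    refine ⟨fun z hz => Submodule.mem_sup_right hz, ?_⟩
    obtain ⟨n, hn, hnM⟩ := Set.not_subset.1 h
    exact ⟨n, Submodule.mem_sup_left hn, hnM⟩
  have htop := hM.2 N' hMN'
  intro x
  have hx : x ∈ N' := by rw [htop]; exact trivial
  exact hmem x hx

end CoreSum
section Primitive

variable {K : Type*} {L : Type*} [Field K] [LieRing L] [LieAlgebra K L]

/-- The centralizer of `N` modulo `R` : `{x | ⁅x, N⁆ ⊆ R}`, as an ideal of `L`. -/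
def czr (N R : LieIdeal K L) : LieIdeal K L where
  toSubmodule :=
    { carrier := {x : L | ∀ n ∈ N, ⁅x, n⁆ ∈ R}
      add_mem' := by
        intro a b ha hb n hn
        rw [add_lie]
        exact R.add_mem (ha n hn) (hb n hn)
      zero_mem' := by
        intro n hn
        rw [zero_lie]
        exact R.zero_mem
      smul_mem' := by
        intro c x hx n hn
        rw [smul_lie]
        exact Submodule.smul_mem R.toSubmodule c (hx n hn) }
  lie_mem := by
    intro x y hy n hn
    have key : ⁅⁅x, y⁆, n⁆ = ⁅x, ⁅y, n⁆⁆ - ⁅y, ⁅x, n⁆⁆ := by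
      rw [lie_lie]
    show ⁅⁅x, y⁆, n⁆ ∈ R
    rw [key]
    refine R.sub_mem (lie_mem_right K L R _ _ (hy n hn)) (hy _ (lie_mem_right K L N _ _ hn))

lemma mem_czr {N R : LieIdeal K L} {x : L} : x ∈ czr N R ↔ ∀ n ∈ N, ⁅x, n⁆ ∈ R := Iff.rfl

lemma not_subset_of_chief {M : LieSubalgebra K L} {R P : LieIdeal K L}
    (hR : IsCoreOf K L R M) (h : IsChiefFactor K L P R) : ¬ (P : Set L) ⊆ M := by
  intro hs
  exact h.1.not_ge (hR.2 P hs)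

lemma chief_inf_eq {R P1 P2 : LieIdeal K L} (h1 : IsChiefFactor K L P1 R)
    (h2 : IsChiefFactor K L P2 R) (hne : P1 ≠ P2) : P1 ⊓ P2 = R := by
  by_contra hcon
  have hle : R ≤ P1 ⊓ P2 := le_inf h1.1.le h2.1.le
  have hlt : R < P1 ⊓ P2 := lt_of_le_of_ne hle (fun h => hcon h.symm)
  have := h1.2 (P1 ⊓ P2) hlt inf_le_left
  have hP12 : P1 ≤ P2 := by rw [← this]; exact inf_le_right
  exact hne (h2.2 P1 h1.1 hP12)

lemma centralizer_eq {M : LieSubalgebra K L} {R P1 P2 : LieIdeal K L}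
    (hM : IsMaximalSubalgebra K L M) (hR : IsCoreOf K L R M)
    (h1 : IsChiefFactor K L P1 R) (h2 : IsChiefFactor K L P2 R) (hne : P1 ≠ P2) :
    czr P1 R = P2 := by
  have hsum1 : SumIsTop K L P1 M := sumIsTop_of_not_subset hM (not_subset_of_chief hR h1)
  have hsum2 : SumIsTop K L P2 M := sumIsTop_of_not_subset hM (not_subset_of_chief hR h2)
  have hinf : P1 ⊓ P2 = R := chief_inf_eq h1 h2 hne
  have hRC : R ≤ czr P1 R := by
    intro r hr
    exact fun n _ => lie_mem_left K L R _ _ hr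
  have hP2C : P2 ≤ czr P1 R := by
    intro p hp n hn
    have : ⁅p, n⁆ ∈ P1 ⊓ P2 :=
      (LieSubmodule.mem_inf _ _ _).2 ⟨lie_mem_right K L P1 _ _ hn, lie_mem_left K L P2 _ _ hp⟩
    rwa [hinf] at this
  set J : LieIdeal K L :=
    { toSubmodule := (czr P1 R).toSubmodule ⊓ M.toSubmodule
      lie_mem := by
        intro x y hy
        obtain ⟨hyC, hyM⟩ := (Submodule.mem_inf).1 hy
        obtain ⟨a, ha, m, hm, rfl⟩ := hsum1 x
        rw [add_lie]
        refine Submodule.add_mem _ ?_ ?_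
        · have h1' : ⁅a, y⁆ ∈ R := by
            have := hyC a ha
            rw [show ⁅a, y⁆ = -⁅y, a⁆ by rw [← lie_skew]]
            exact R.neg_mem this
          exact (Submodule.mem_inf).2 ⟨hRC h1', hR.1 h1'⟩
        · exact (Submodule.mem_inf).2 ⟨(czr P1 R).lie_mem hyC, M.lie_mem hm hyM⟩ } with hJdef
  have hJR : J ≤ R := hR.2 J (fun x hx => ((Submodule.mem_inf).1 hx).2)
  refine le_antisymm ?_ hP2C
  intro c hc
  obtain ⟨a, ha, m, hm, rfl⟩ := hsum2 c
  have hmC : m ∈ czr P1 R := by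
    have : (a + m) - a ∈ czr P1 R := (czr P1 R).sub_mem hc (hP2C ha)
    simpa using this
  have hmJ : m ∈ J := (Submodule.mem_inf).2 ⟨hmC, hm⟩
  exact P2.add_mem ha (h2.1.le (hJR hmJ))

lemma primitive_type3 {M : LieSubalgebra K L} {R P1 P2 : LieIdeal K L}
    (hM : IsMaximalSubalgebra K L M) (hR : IsCoreOf K L R M)
    (h1 : IsChiefFactor K L P1 R) (h2 : IsChiefFactor K L P2 R) (hne : P1 ≠ P2) :
    QuotPrimitiveType3 K L R P1 P2 := by
  have hnonab : ∀ P P' : LieIdeal K L, IsChiefFactor K L P R → IsChiefFactor K L P' R →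
      P ≠ P' → ¬ FactorAbelian K L P R := by
    intro P P' hP hP' hPne hab
    have hPC : P ≤ czr P R := fun p hp n hn => hab p hp n hn
    rw [centralizer_eq hM hR hP hP' hPne] at hPC
    exact hPne (hP'.2 P hP.1 hPC)
  refine ⟨⟨M, hM, hR⟩, hne, h1, h2, hnonab P1 P2 h1 h2 hne, hnonab P2 P1 h2 h1 hne.symm, ?_⟩
  intro J hJ
  by_cases hJ1 : J = P1
  · exact Or.inl hJ1
  · right
    have e1 : czr P1 R = P2 := centralizer_eq hM hR h1 h2 hne
    have e2 : czr P1 R = J := centralizer_eq hM hR h1 hJ (fun h => hJ1 h.symm)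
    rw [← e2, e1]

end Primitive
section Crossing

variable {K : Type*} {L : Type*} [Field K] [LieRing L] [LieAlgebra K L]

lemma t3_swap {I J1 J2 : LieIdeal K L} (h : QuotPrimitiveType3 K L I J1 J2) :
    QuotPrimitiveType3 K L I J2 J1 := by
  obtain ⟨hp, hne, h1, h2, hn1, hn2, huniq⟩ := h
  exact ⟨hp, hne.symm, h2, h1, hn2, hn1, fun J hJ => (huniq J hJ).symm⟩

lemma crossing_connected {U V W X : LieIdeal K L}
    (hcross : MCrossing K L U V W X) (hVX : IsChiefFactor K L V X) :
    LIso K L V X W X ∨ ∃ I J1 J2 : LieIdeal K L, QuotPrimitiveType3 K L I J1 J2 ∧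
      LIso K L J1 I V X ∧ LIso K L J2 I W X := by
  obtain ⟨hUV, hWX, ⟨hsup, hinf⟩, hFrat, hSupp⟩ := hcross
  obtain ⟨M, hM, hMsum, hXW, hXM⟩ := hSupp
  obtain ⟨R, hR⟩ := core_exists M
  have hXR : X ≤ R := hR.2 X hXM
  have hXV : X ≤ V := hinf ▸ inf_le_left
  have hWU : W ≤ U := hsup ▸ le_sup_right
  have hWnotM : ¬ (W : Set L) ⊆ M := by
    intro hWM
    refine hM.1 ?_
    ext x
    simp only [LieSubalgebra.mem_top, iff_true]
    exact top_of_sum_subset hMsum hWM x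
  have hVnotM : ¬ (V : Set L) ⊆ M := by
    intro hVM
    have hUM := hFrat.2 M hM hVM
    exact hWnotM (fun x hx => hUM (hWU hx))
  have hVR : V ⊓ R = X := by
    by_contra hcon
    have hle : X ≤ V ⊓ R := le_inf hXV hXR
    have hlt : X < V ⊓ R := lt_of_le_of_ne hle (fun h => hcon h.symm)
    have := hVX.2 (V ⊓ R) hlt inf_le_left
    have hVsub : (V : Set L) ⊆ M := by
      intro x hx
      have : x ∈ V ⊓ R := by rw [this]; exact hx
      exact hR.1 ((LieSubmodule.mem_inf _ _ _).1 this).2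
    exact hVnotM hVsub
  have hWR : W ⊓ R = X := by
    by_contra hcon
    have hle : X ≤ W ⊓ R := le_inf hXW hXR
    have hlt : X < W ⊓ R := lt_of_le_of_ne hle (fun h => hcon h.symm)
    have := hWX.2 (W ⊓ R) hlt inf_le_left
    have hWsub : (W : Set L) ⊆ M := by
      intro x hx
      have : x ∈ W ⊓ R := by rw [this]; exact hx
      exact hR.1 ((LieSubmodule.mem_inf _ _ _).1 this).2
    exact hWnotM hWsub
  have hsupV : (V ⊔ R : LieIdeal K L) = R ⊔ V := sup_comm _ _
  have hinfV : R ⊓ V = X := by rw [inf_comm]; exact hVR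
  have hsupW : (W ⊔ R : LieIdeal K L) = R ⊔ W := sup_comm _ _
  have hinfW : R ⊓ W = X := by rw [inf_comm]; exact hWR
  have hN1chief : IsChiefFactor K L (V ⊔ R) R := (chief_searrow_iff hsupV hinfV).2 hVX
  have hN2chief : IsChiefFactor K L (W ⊔ R) R := (chief_searrow_iff hsupW hinfW).2 hWX
  have hIsoV : LIso K L V X (V ⊔ R) R := liso_searrow hsupV hinfV
  have hIsoW : LIso K L W X (W ⊔ R) R := liso_searrow hsupW hinfW
  by_cases hN : (V ⊔ R : LieIdeal K L) = W ⊔ R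
  · left
    rw [hN] at hIsoV
    exact liso_trans hIsoV (liso_symm hIsoW)
  · right
    exact ⟨R, V ⊔ R, W ⊔ R, primitive_type3 hM hR hN1chief hN2chief hN,
      liso_symm hIsoV, liso_symm hIsoW⟩

end Crossing
theorem stmt13 (A B C D : LieIdeal K L)
    (hAB : IsChiefFactor K L A B) (hCD : IsChiefFactor K L C D)
    (hrel : MRelated K L A B C D) :
    LConnected K L A B C D := by
  rcases hrel with ⟨R, S, _, _, hsA, hsC⟩ | ⟨U, V, W, X, hcross, hsA, hsC⟩ |
    ⟨Y, Z, _, hsA, hsC⟩ | ⟨U, V, W, X, hcross, hsA, hsC⟩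
  · -- common supplemented factor R/S covering both
    left
    exact liso_trans (liso_searrow hsA.1 hsA.2) (liso_symm (liso_searrow hsC.1 hsC.2))
  · -- m-crossing, factors below
    have hVXchief : IsChiefFactor K L V X := (chief_searrow_iff hsA.1 hsA.2).2 hAB
    have hA : LIso K L A B V X := liso_searrow hsA.1 hsA.2
    have hC : LIso K L C D W X := liso_searrow hsC.1 hsC.2
    rcases crossing_connected hcross hVXchief with h | ⟨I, J1, J2, ht3, hJ1, hJ2⟩
    · left
      exact liso_trans hA (liso_trans h (liso_symm hC))
    · right
      exact ⟨I, J1, J2, ht3, liso_trans hJ1 (liso_symm hA), liso_trans hJ2 (liso_symm hC)⟩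
  · -- common Frattini factor Y/Z covered by both
    left
    exact liso_trans (liso_symm (liso_searrow hsA.1 hsA.2)) (liso_searrow hsC.1 hsC.2)
  · -- m-crossing, factors above
    obtain ⟨hUVc, hWXc, ⟨hsupUVW, hinfUVW⟩, hFr, hSu⟩ := hcross
    have hcross' : MCrossing K L U V W X := ⟨hUVc, hWXc, ⟨hsupUVW, hinfUVW⟩, hFr, hSu⟩
    have hA : LIso K L U V A B := liso_searrow hsA.1 hsA.2
    have hC : LIso K L U W C D := liso_searrow hsC.1 hsC.2
    have hUWchief : IsChiefFactor K L U W := (chief_searrow_iff hsC.1 hsC.2).1 hCD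
    have hsup' : U = W ⊔ V := by rw [hsupUVW, sup_comm]
    have hinf' : W ⊓ V = X := by rw [inf_comm]; exact hinfUVW
    have hVXchief : IsChiefFactor K L V X := (chief_searrow_iff hsup' hinf').1 hUWchief
    have hWX_UV : LIso K L W X U V := liso_searrow hsupUVW hinfUVW
    have hVX_UW : LIso K L V X U W := liso_searrow hsup' hinf'
    rcases crossing_connected hcross' hVXchief with h | ⟨I, J1, J2, ht3, hJ1, hJ2⟩
    · left
      -- A/B ≅ U/V ≅ W/X ≅ V/X ≅ U/W ≅ C/D
      exact liso_trans (liso_symm hA)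
        (liso_trans (liso_symm hWX_UV) (liso_trans (liso_symm h) (liso_trans hVX_UW hC)))
    · right
      refine ⟨I, J2, J1, t3_swap ht3, ?_, ?_⟩
      · exact liso_trans hJ2 (liso_trans hWX_UV hA)
      · exact liso_trans hJ1 (liso_trans hVX_UW hC)
end

section
/- Let L be a finite-dimensional Lie algebra, let A/B and C/D be non-abelian chief factors of L that are m-related and both complemented. Then they are related via case (1): there exists a supplemented chief factor R/S with R/S ↘ A/B and R/S ↘ C/D. -/
variable {K : Type*} {L : Type*} [Field K] [LieRing L] [LieAlgebra K L]
variable [FiniteDimensional K L]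

section AuxProofs

variable {K : Type*} {L : Type*} [Field K] [LieRing L] [LieAlgebra K L]

open Module

private lemma aux_subalg_ne_top_iff {E : LieSubalgebra K L} (h : E ≠ ⊤) :
    (E : Submodule K L) < ⊤ := by
  rcases lt_or_eq_of_le (le_top : (E : Submodule K L) ≤ ⊤) with h' | h'
  · exact h'
  · exfalso
    apply h
    ext x
    simp only [LieSubalgebra.mem_top, iff_true]
    have : x ∈ (E : Submodule K L) := h' ▸ Submodule.mem_top
    exact this

private lemma aux_exists_maximal [FiniteDimensional K L] (E : LieSubalgebra K L) (hE : E ≠ ⊤) :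
    ∃ M : LieSubalgebra K L, IsMaximalSubalgebra K L M ∧ E ≤ M := by
  suffices H : ∀ (n : ℕ) (E : LieSubalgebra K L),
      finrank K L - finrank K (E : Submodule K L) ≤ n → E ≠ ⊤ →
      ∃ M : LieSubalgebra K L, IsMaximalSubalgebra K L M ∧ E ≤ M from
    H _ E le_rfl hE
  intro n
  induction n with
  | zero =>
    intro E hn hE
    exfalso
    have h1 : finrank K (E : Submodule K L) < finrank K L := by
      simpa using Submodule.finrank_lt (aux_subalg_ne_top_iff hE).ne
    omega
  | succ n ih =>
    intro E hn hE
    by_cases hmax : ∀ P : LieSubalgebra K L, E < P → P = ⊤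
    · exact ⟨E, ⟨hE, hmax⟩, le_rfl⟩
    · push_neg at hmax
      obtain ⟨P, hEP, hP⟩ := hmax
      have hfr : finrank K (E : Submodule K L) < finrank K (P : Submodule K L) := by
        apply Submodule.finrank_lt_finrank_of_lt
        rcases lt_or_eq_of_le ((LieSubalgebra.toSubmodule_le_toSubmodule E P).2 hEP.le)
          with h' | h'
        · exact h'
        · exfalso
          exact hEP.ne (by ext x; rw [← LieSubalgebra.mem_toSubmodule, h',
            LieSubalgebra.mem_toSubmodule])
      have h2 : finrank K (P : Submodule K L) < finrank K L := by
        simpa using Submodule.finrank_lt (aux_subalg_ne_top_iff hP).ne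
      obtain ⟨M, hM, hPM⟩ := ih P (by omega) hP
      exact ⟨M, hM, hEP.le.trans hPM⟩

private lemma aux_ad_nilpotent [FiniteDimensional K L] (N : LieIdeal K L)
    (hfrat : ∀ M : LieSubalgebra K L, IsMaximalSubalgebra K L M → (N : Set L) ⊆ M)
    {x : L} (hx : x ∈ N) : IsNilpotent (LieAlgebra.ad K L x) := by
  by_cases hE : LieSubalgebra.engel K x = ⊤
  · have hall : ∀ y : L, ∃ n : ℕ, ((LieAlgebra.ad K L x) ^ n) y = 0 := by
      intro y
      have hy : y ∈ LieSubalgebra.engel K x := by rw [hE]; exact LieSubalgebra.mem_top y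
      exact (LieSubalgebra.mem_engel_iff K x y).1 hy
    let b := Module.finBasis K L
    choose f hf using fun i => hall (b i)
    refine ⟨Finset.univ.sup f, ?_⟩
    apply b.ext
    intro i
    have hle : f i ≤ Finset.univ.sup f := Finset.le_sup (Finset.mem_univ i)
    rw [LinearMap.zero_apply, ← Nat.sub_add_cancel hle, pow_add, Module.End.mul_apply, hf i,
      map_zero]
  · obtain ⟨M, hM, hEM⟩ := aux_exists_maximal _ hE
    exfalso
    have hNM : (N : Set L) ⊆ M := hfrat M hM
    obtain ⟨k, hk⟩ := Filter.eventually_atTop.mp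
      (LinearMap.eventually_codisjoint_ker_pow_range_pow (LieAlgebra.ad K L x))
    have hcod := hk (k + 1) (Nat.le_add_right k 1)
    have h1 : LinearMap.ker ((LieAlgebra.ad K L x) ^ (k + 1)) ≤ (M : Submodule K L) := by
      intro y hy
      exact hEM ((LieSubalgebra.mem_engel_iff K x y).2 ⟨k + 1, hy⟩)
    have hNsub : ∀ (j : ℕ) (y : L), ((LieAlgebra.ad K L x) ^ (j + 1)) y ∈ N := by
      intro j
      induction j with
      | zero =>
        intro y
        simpa only [zero_add, pow_one, LieAlgebra.ad_apply] using lie_mem_left K L N x y hx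
      | succ j ih =>
        intro y
        rw [pow_succ', Module.End.mul_apply, LieAlgebra.ad_apply]
        exact N.lie_mem (ih y)
    have h2 : LinearMap.range ((LieAlgebra.ad K L x) ^ (k + 1)) ≤ (M : Submodule K L) := by
      rintro z ⟨y, rfl⟩
      exact hNM (hNsub k y)
    have htop : (M : Submodule K L) = ⊤ := by
      rw [eq_top_iff, ← codisjoint_iff.mp hcod]
      exact sup_le h1 h2
    apply hM.1
    ext y
    simp only [LieSubalgebra.mem_top, iff_true]
    exact (LieSubalgebra.mem_toSubmodule (L' := M)).1 (htop ▸ Submodule.mem_top)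
private lemma aux_minimal_frattini_abelian [FiniteDimensional K L] (N : LieIdeal K L)
    (hne : N ≠ ⊥)
    (hmin : ∀ J : LieIdeal K L, J ≠ ⊥ → J ≤ N → J = N)
    (hfrat : ∀ M : LieSubalgebra K L, IsMaximalSubalgebra K L M → (N : Set L) ⊆ M) :
    ∀ a ∈ N, ∀ b ∈ N, ⁅a, b⁆ = (0 : L) := by
  have hadN : ∀ y : ↥N, IsNilpotent (LieAlgebra.ad K (↥N) y) := by
    intro y
    obtain ⟨n, hn⟩ := aux_ad_nilpotent N hfrat y.2
    refine ⟨n, ?_⟩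
    have key : ∀ (m : ℕ) (z : ↥N),
        ((((LieAlgebra.ad K (↥N)) y ^ m) z : ↥N) : L) = ((LieAlgebra.ad K L ↑y) ^ m) (z : L) := by
      intro m
      induction m with
      | zero => intro z; simp
      | succ m ih =>
        intro z
        rw [pow_succ, Module.End.mul_apply, pow_succ, Module.End.mul_apply, ih]
        rfl
    ext z
    have h3 := key n z
    rw [hn, LinearMap.zero_apply] at h3
    simpa using h3
  haveI : IsNoetherian K ↥N := inferInstance
  haveI : LieRing.IsNilpotent ↥N := (LieAlgebra.isNilpotent_iff_forall (R := K)).2 hadN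
  haveI : Nontrivial ↥N := (LieSubmodule.nontrivial_iff_ne_bot K L L (N := N)).2 hne
  haveI := LieAlgebra.non_trivial_center_of_isNilpotent (R := K) (L := ↥N)
  obtain ⟨z, hz0⟩ := exists_ne (0 : LieAlgebra.center K ↥N)
  have hzc : ∀ w : ↥N, ⁅w, (z : ↥N)⁆ = 0 :=
    (LieModule.mem_maxTrivSubmodule K ↥N ↥N (z : ↥N)).1 z.2
  let Zs : Submodule K L :=
    { carrier := {q : L | q ∈ N ∧ ∀ n ∈ N, ⁅q, n⁆ = 0}
      add_mem' := by
        rintro a b ⟨haN, hac⟩ ⟨hbN, hbc⟩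
        exact ⟨N.add_mem haN hbN, fun n hn => by rw [add_lie, hac n hn, hbc n hn, add_zero]⟩
      zero_mem' := ⟨N.zero_mem, fun n _ => zero_lie n⟩
      smul_mem' := by
        rintro c a ⟨haN, hac⟩
        exact ⟨N.smul_mem c haN, fun n hn => by rw [smul_lie, hac n hn, smul_zero]⟩ }
  let Z : LieIdeal K L :=
    { Zs with
      lie_mem := by
        rintro x m ⟨hmN, hmc⟩
        refine ⟨N.lie_mem hmN, fun n hn => ?_⟩
        rw [lie_lie, hmc n hn, lie_zero, hmc ⁅x, n⁆ (N.lie_mem hn), sub_zero] }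
  have hZN : Z ≤ N := fun q hq => hq.1
  have hZne : Z ≠ ⊥ := by
    intro hbot
    apply hz0
    have hmem : ((z : ↥N) : L) ∈ Z := by
      refine ⟨(z : ↥N).2, fun n hn => ?_⟩
      have h1 := hzc ⟨n, hn⟩
      have h2 : ⁅(n : L), ((z : ↥N) : L)⁆ = 0 := congrArg Subtype.val h1
      rw [← lie_skew, h2, neg_zero]
    rw [hbot, LieSubmodule.mem_bot] at hmem
    apply Subtype.ext
    apply Subtype.ext
    exact hmem
  have hZ : Z = N := hmin Z hZne hZN
  intro a ha b hb
  have haZ : a ∈ Z := by rw [hZ]; exact ha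
  exact haZ.2 b hb
private lemma aux_frattini_factor_abelian [FiniteDimensional K L] (U V : LieIdeal K L)
    (h : FrattiniFactor K L U V) : ∀ a ∈ U, ∀ b ∈ U, ⁅a, b⁆ ∈ V := by
  obtain ⟨⟨hlt, hchief⟩, hfr⟩ := h
  let π : L →ₗ⁅K⁆ L ⧸ V :=
    { toLinearMap := (LieSubmodule.Quotient.mk' V).toLinearMap
      map_lie' := fun {x y} => LieSubmodule.Quotient.mk_bracket V x y }
  have hsurj : Function.Surjective π := fun q => Quotient.inductionOn' q (fun x => ⟨x, rfl⟩)
  have hker : ∀ w : L, π w = 0 ↔ w ∈ V := fun w => LieSubmodule.Quotient.mk_eq_zero V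
  have hπsub : ∀ a b : L, π (a - b) = π a - π b := fun a b => π.toLinearMap.map_sub a b
  haveI : Module.Finite K (L ⧸ V) := Module.Finite.of_surjective π.toLinearMap hsurj
  let Nq : LieIdeal K (L ⧸ V) :=
    { Submodule.map π.toLinearMap U.toSubmodule with
      lie_mem := by
        rintro x m hm
        obtain ⟨u, hu, rfl⟩ := hm
        obtain ⟨l, rfl⟩ := hsurj x
        show ⁅π l, π u⁆ ∈ Submodule.map π.toLinearMap U.toSubmodule
        rw [← π.map_lie]
        exact Submodule.mem_map_of_mem (U.lie_mem hu) }
  have hmemN : ∀ q : L ⧸ V, q ∈ Nq ↔ ∃ u ∈ U, π u = q := by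
    intro q
    exact Submodule.mem_map
  have hNne : Nq ≠ ⊥ := by
    obtain ⟨u, huU, huV⟩ := SetLike.exists_of_lt hlt
    intro hbot
    have hm : π u ∈ Nq := (hmemN _).2 ⟨u, huU, rfl⟩
    rw [hbot, LieSubmodule.mem_bot] at hm
    exact huV ((hker u).1 hm)
  have hNmin : ∀ J : LieIdeal K (L ⧸ V), J ≠ ⊥ → J ≤ Nq → J = Nq := by
    intro J hJne hJN
    let J0 : LieIdeal K L :=
      { Submodule.comap π.toLinearMap J.toSubmodule with
        lie_mem := by
          intro x m hm
          show π ⁅x, m⁆ ∈ J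
          rw [π.map_lie]
          exact J.lie_mem hm }
    have hmemJ0 : ∀ w : L, w ∈ J0 ↔ π w ∈ J := fun w => Iff.rfl
    have hVJ0 : V ≤ J0 := by
      intro v hv
      rw [hmemJ0, (hker v).2 hv]
      exact J.zero_mem
    have hJ0U : J0 ≤ U := by
      intro m hm
      obtain ⟨u, hu, he⟩ := (hmemN _).1 (hJN ((hmemJ0 m).1 hm))
      have hsub : m - u ∈ V := (hker _).1 (by rw [hπsub, he, sub_self])
      have : m = (m - u) + u := by abel
      rw [this]
      exact U.add_mem (hlt.le hsub) hu
    obtain ⟨q, hqJ, hq0⟩ : ∃ q : L ⧸ V, q ∈ J ∧ q ≠ 0 := by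
      by_contra hcon
      push_neg at hcon
      apply hJne
      ext q
      rw [LieSubmodule.mem_bot]
      exact ⟨fun hq => hcon q hq, fun h0 => h0 ▸ J.zero_mem⟩
    obtain ⟨u, huU, rfl⟩ := (hmemN _).1 (hJN hqJ)
    have huJ0 : u ∈ J0 := (hmemJ0 u).2 hqJ
    have huV : u ∉ V := fun hv => hq0 ((hker u).2 hv)
    have hVlt : V < J0 := hVJ0.lt_of_ne (fun he => huV (he ▸ huJ0))
    have hJ0 : J0 = U := hchief J0 hVlt hJ0U
    refine le_antisymm hJN ?_
    intro q hq
    obtain ⟨u', hu', rfl⟩ := (hmemN _).1 hq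
    have : u' ∈ J0 := by rw [hJ0]; exact hu'
    exact (hmemJ0 u').1 this
  have hNfr : ∀ M' : LieSubalgebra K (L ⧸ V), IsMaximalSubalgebra K (L ⧸ V) M' →
      (Nq : Set (L ⧸ V)) ⊆ M' := by
    intro M' hM'
    let M : LieSubalgebra K L := LieSubalgebra.comap π M'
    have hmemM : ∀ w : L, w ∈ M ↔ π w ∈ M' := fun w => Iff.rfl
    have hMne : M ≠ ⊤ := by
      obtain ⟨q, hq⟩ : ∃ q : L ⧸ V, q ∉ M' := by
        by_contra hcon
        push_neg at hcon
        exact hM'.1 (by ext q; simp only [LieSubalgebra.mem_top, iff_true]; exact hcon q)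
      obtain ⟨l, rfl⟩ := hsurj q
      intro htop
      exact hq ((hmemM l).1 (by rw [htop]; exact LieSubalgebra.mem_top l))
    have hMmax : ∀ P : LieSubalgebra K L, M < P → P = ⊤ := by
      intro P hMP
      have h1 : M' ≤ LieSubalgebra.map π P := by
        intro m' hm'
        obtain ⟨l, rfl⟩ := hsurj m'
        exact (LieSubalgebra.mem_map _ _ _).2 ⟨l, hMP.le ((hmemM l).2 hm'), rfl⟩
      have h2 : M' ≠ LieSubalgebra.map π P := by
        obtain ⟨p, hpP, hpM⟩ := SetLike.exists_of_lt hMP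
        intro he
        apply hpM
        apply (hmemM p).2
        rw [he]
        exact (LieSubalgebra.mem_map _ _ _).2 ⟨p, hpP, rfl⟩
      have htop : LieSubalgebra.map π P = ⊤ := hM'.2 _ (h1.lt_of_ne h2)
      ext y
      simp only [LieSubalgebra.mem_top, iff_true]
      have hy : π y ∈ LieSubalgebra.map π P := by rw [htop]; exact LieSubalgebra.mem_top (π y)
      obtain ⟨p, hp, he⟩ := (LieSubalgebra.mem_map _ _ _).1 hy
      have hsub : y - p ∈ V := (hker _).1 (by rw [hπsub, he, sub_self])
      have hsubP : y - p ∈ P := hMP.le ((hmemM _).2 (by rw [(hker _).2 hsub]; exact zero_mem M'))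
      have : y = (y - p) + p := by abel
      rw [this]
      exact P.add_mem hsubP hp
    have hUM : (U : Set L) ⊆ M := hfr M ⟨hMne, hMmax⟩ (by
      intro v hv
      apply (hmemM v).2
      rw [(hker v).2 hv]
      exact zero_mem M')
    intro q hq
    obtain ⟨u, hu, rfl⟩ := (hmemN q).1 hq
    exact (hmemM u).1 (hUM hu)
  have habel := aux_minimal_frattini_abelian Nq hNne hNmin hNfr
  intro a ha b hb
  apply (hker _).1
  rw [π.map_lie]
  exact habel _ ((hmemN _).2 ⟨a, ha, rfl⟩) _ ((hmemN _).2 ⟨b, hb, rfl⟩)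

end AuxProofs

theorem stmt16 (A B C D : LieIdeal K L)
    (hAB : IsChiefFactor K L A B) (hCD : IsChiefFactor K L C D)
    (hnaAB : ¬ FactorAbelian K L A B) (hnaCD : ¬ FactorAbelian K L C D)
    (hrel : MRelated K L A B C D)
    (hcAB : ∃ M : LieSubalgebra K L, IsMaximalSubalgebra K L M ∧ Complements K L M A B)
    (hcCD : ∃ M : LieSubalgebra K L, IsMaximalSubalgebra K L M ∧ Complements K L M C D) :
    ∃ R S : LieIdeal K L, IsChiefFactor K L R S ∧ SupplementedFactor K L R S ∧
      Searrow K L R S A B ∧ Searrow K L R S C D := by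
  rcases hrel with h1 | h2 | h3 | h4
  · obtain ⟨R, S, hc, hs, hA, hC⟩ := h1
    exact ⟨R, S, hc, hs, hA, hC⟩
  · -- case (2): contradiction with `C/D` non-abelian
    obtain ⟨U, V, W, X, ⟨hUV, hWX, ⟨hUsup, hVWinf⟩, hFrat, -⟩, ⟨hVX, hXA⟩, ⟨hWsup, hXC⟩⟩ := h2
    exfalso
    apply hnaCD
    intro c hc c' hc'
    have hCW : C ≤ W := by rw [hWsup]; exact le_sup_right
    have hWU : W ≤ U := by rw [hUsup]; exact le_sup_right
    have hbr : ⁅c, c'⁆ ∈ V :=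
      aux_frattini_factor_abelian U V hFrat c (hWU (hCW hc)) c' (hWU (hCW hc'))
    have hbrC : ⁅c, c'⁆ ∈ C := lie_mem_right K L C c c' hc'
    have hm : ⁅c, c'⁆ ∈ V ⊓ W := by
      rw [LieSubmodule.mem_inf]
      exact ⟨hbr, hCW hbrC⟩
    rw [hVWinf] at hm
    rw [← hXC, LieSubmodule.mem_inf]
    exact ⟨hm, hbrC⟩
  · -- case (3): contradiction with `A/B` non-abelian
    obtain ⟨Y, Z, hFrat, ⟨hAsup, hBYinf⟩, -⟩ := h3
    exfalso
    apply hnaAB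
    intro a ha a' ha'
    have hZB : Z ≤ B := by rw [← hBYinf]; exact inf_le_left
    have habel := aux_frattini_factor_abelian Y Z hFrat
    have ha2 : a ∈ B ⊔ Y := by rw [← hAsup]; exact ha
    have ha2' : a' ∈ B ⊔ Y := by rw [← hAsup]; exact ha'
    obtain ⟨b, hb, y, hy, rfl⟩ := (LieSubmodule.mem_sup _ _ _).1 ha2
    obtain ⟨b', hb', y', hy', rfl⟩ := (LieSubmodule.mem_sup _ _ _).1 ha2'
    rw [add_lie, lie_add, lie_add]
    refine B.add_mem (B.add_mem ?_ ?_) (B.add_mem ?_ ?_)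
    · exact lie_mem_right K L B b b' hb'
    · exact lie_mem_left K L B b y' hb
    · exact lie_mem_right K L B y b' hb'
    · exact hZB (habel y hy y' hy')
  · -- case (4): contradiction with `A/B` non-abelian
    obtain ⟨U, V, W, X, ⟨hUV, hWX, hSear, hFrat, -⟩, ⟨hAsup, hBUinf⟩, -⟩ := h4
    exfalso
    apply hnaAB
    intro a ha a' ha'
    have hVB : V ≤ B := by rw [← hBUinf]; exact inf_le_left
    have habel := aux_frattini_factor_abelian U V hFrat
    have ha2 : a ∈ B ⊔ U := by rw [← hAsup]; exact ha
    have ha2' : a' ∈ B ⊔ U := by rw [← hAsup]; exact ha'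
    obtain ⟨b, hb, u, hu, rfl⟩ := (LieSubmodule.mem_sup _ _ _).1 ha2
    obtain ⟨b', hb', u', hu', rfl⟩ := (LieSubmodule.mem_sup _ _ _).1 ha2'
    rw [add_lie, lie_add, lie_add]
    refine B.add_mem (B.add_mem ?_ ?_) (B.add_mem ?_ ?_)
    · exact lie_mem_right K L B b b' hb'
    · exact lie_mem_left K L B b u' hb
    · exact lie_mem_right K L B u b' hb'
    · exact hVB (habel u hu u' hu')
end

section
/- Let L be a finite-dimensional Lie algebra, A/B a non-abelian chief factor of L, and U, S maximal subalgebras of L with U_L ≠ S_L both supplementing A/B, where U is of type 3 (L/U_L is primitive of type 3) and S is monolithic (L/S_L is monolithic primitive). Then U_L ⊂ S_L = C_L(A/B), and M = A + (U ∩ S) is a maximal subalgebra of L of type 2 with core M_L = A + U_L which supplements the chief factor S_L/U_L. -/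
section Aux

variable {K : Type*} {L : Type*} [Field K] [LieRing L] [LieAlgebra K L]

lemma subalg_top_of {X : LieSubalgebra K L} (h : (X : Submodule K L) = ⊤) : X = ⊤ :=
  (LieSubalgebra.toSubmodule_inj _ _).1
    (h.trans (LieSubalgebra.top_toSubmodule).symm)

/-- The sum of an ideal and a subalgebra, as a subalgebra. -/
def asup (I : LieIdeal K L) (X : LieSubalgebra K L) : LieSubalgebra K L where
  toSubmodule := (I : Submodule K L) ⊔ (X : Submodule K L)
  lie_mem' := by
    intro x y hx hy
    have hx' : x ∈ (I : Submodule K L) ⊔ (X : Submodule K L) := hx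
    have hy' : y ∈ (I : Submodule K L) ⊔ (X : Submodule K L) := hy
    obtain ⟨a, ha, m, hm, rfl⟩ := Submodule.mem_sup.mp hx'
    obtain ⟨a', ha', m', hm', rfl⟩ := Submodule.mem_sup.mp hy'
    have ha2 : a ∈ I := ha
    have ha2' : a' ∈ I := ha'
    have hm2 : m ∈ X := hm
    have hm2' : m' ∈ X := hm'
    show ⁅a + m, a' + m'⁆ ∈ (I : Submodule K L) ⊔ (X : Submodule K L)
    rw [add_lie, lie_add, lie_add]
    refine add_mem (add_mem ?_ ?_) (add_mem ?_ ?_)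
    · exact Submodule.mem_sup_left (I.lie_mem ha')
    · exact Submodule.mem_sup_left (show ⁅a, m'⁆ ∈ I from lie_mem_left K L I a m' ha2)
    · exact Submodule.mem_sup_left (I.lie_mem ha')
    · exact Submodule.mem_sup_right (X.lie_mem' hm2 hm2')

lemma mem_asup {I : LieIdeal K L} {X : LieSubalgebra K L} {x : L} :
    x ∈ asup I X ↔ ∃ a ∈ I, ∃ m ∈ X, a + m = x := by
  have : x ∈ asup I X ↔ x ∈ (I : Submodule K L) ⊔ (X : Submodule K L) := Iff.rfl
  rw [this, Submodule.mem_sup]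
  rfl

lemma asup_coe (I : LieIdeal K L) (X : LieSubalgebra K L) :
    ((asup I X : LieSubalgebra K L) : Submodule K L) = (I : Submodule K L) ⊔ (X : Submodule K L) :=
  rfl

lemma ideal_le_asup (I : LieIdeal K L) (X : LieSubalgebra K L) :
    (I : LieSubalgebra K L) ≤ asup I X := fun x hx => Submodule.mem_sup_left hx

lemma subalg_le_asup (I : LieIdeal K L) (X : LieSubalgebra K L) :
    X ≤ asup I X := fun x hx => Submodule.mem_sup_right hx

lemma sup_ideal_coe (I : LieIdeal K L) (X : LieSubalgebra K L) :
    (((I : LieSubalgebra K L) ⊔ X : LieSubalgebra K L) : Submodule K L) =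
      (I : Submodule K L) ⊔ (X : Submodule K L) := by
  refine le_antisymm ?_ ?_
  · intro x hx
    exact (sup_le (ideal_le_asup I X) (subalg_le_asup I X)) hx
  · intro x hx
    obtain ⟨a, ha, m, hm, rfl⟩ := Submodule.mem_sup.mp hx
    exact add_mem ((le_sup_left : (I : LieSubalgebra K L) ≤ _) ha)
      ((le_sup_right : X ≤ _) hm)

lemma sumIsTop_iff (A' : LieIdeal K L) (X : LieSubalgebra K L) :
    SumIsTop K L A' X ↔ (A' : Submodule K L) ⊔ (X : Submodule K L) = ⊤ := by
  constructor
  · intro h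
    rw [eq_top_iff]
    intro x _
    obtain ⟨a, ha, m, hm, rfl⟩ := h x
    exact add_mem (Submodule.mem_sup_left ha) (Submodule.mem_sup_right hm)
  · intro h x
    have hx : x ∈ (A' : Submodule K L) ⊔ (X : Submodule K L) := h ▸ Submodule.mem_top
    obtain ⟨a, ha, m, hm, hx⟩ := Submodule.mem_sup.mp hx
    exact ⟨a, ha, m, hm, hx.symm⟩

/-- The centralizer of the factor `A/B` as an ideal. -/
def cent (A B : LieIdeal K L) : LieIdeal K L where
  carrier := {x : L | ∀ a ∈ A, ⁅x, a⁆ ∈ B}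
  add_mem' := by
    intro x y hx hy a ha
    rw [add_lie]; exact add_mem (hx a ha) (hy a ha)
  zero_mem' := by
    intro a ha
    rw [zero_lie]; exact zero_mem _
  smul_mem' := by
    intro c x hx a ha
    rw [smul_lie]; exact SMulMemClass.smul_mem c (hx a ha)
  lie_mem := by
    intro y x hx a ha
    rw [lie_lie]
    exact sub_mem (B.lie_mem (hx a ha)) (hx _ (A.lie_mem ha))

lemma mem_cent {A B : LieIdeal K L} {x : L} :
    x ∈ cent A B ↔ ∀ a ∈ A, ⁅x, a⁆ ∈ B := Iff.rfl

lemma exists_inter_ideal (Cc A' : LieIdeal K L) (X : LieSubalgebra K L)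
    (htop : (A' : Submodule K L) ⊔ (X : Submodule K L) = ⊤)
    (h : ∀ a ∈ A', ∀ c ∈ Cc, c ∈ X → ⁅a, c⁆ ∈ Cc ∧ ⁅a, c⁆ ∈ X) :
    ∃ J : LieIdeal K L, ∀ x, x ∈ J ↔ x ∈ Cc ∧ x ∈ X := by
  refine ⟨{ toSubmodule := (Cc : Submodule K L) ⊓ (X : Submodule K L), lie_mem := ?_ }, ?_⟩
  · intro y x hx
    have hx' : x ∈ (Cc : Submodule K L) ⊓ (X : Submodule K L) := hx
    obtain ⟨hxC, hxX⟩ := Submodule.mem_inf.mp hx'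
    have hy : y ∈ (A' : Submodule K L) ⊔ (X : Submodule K L) := htop ▸ Submodule.mem_top
    obtain ⟨a, ha, m, hm, rfl⟩ := Submodule.mem_sup.mp hy
    show ⁅a + m, x⁆ ∈ (Cc : Submodule K L) ⊓ (X : Submodule K L)
    rw [add_lie]
    refine add_mem ?_ ?_
    · obtain ⟨h1, h2⟩ := h a ha x hxC hxX
      exact Submodule.mem_inf.mpr ⟨h1, h2⟩
    · exact Submodule.mem_inf.mpr ⟨Cc.lie_mem hxC, X.lie_mem' hm hxX⟩
  · intro x
    exact Submodule.mem_inf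

lemma exists_chief_le [FiniteDimensional K L] {I D : LieIdeal K L} (hID : I < D) :
    ∃ E : LieIdeal K L, E ≤ D ∧ IsChiefFactor K L E I := by
  obtain ⟨n, hn⟩ : ∃ n, Module.finrank K (D : Submodule K L) ≤ n := ⟨_, le_rfl⟩
  induction n generalizing D with
  | zero =>
    exfalso
    have hD : (D : Submodule K L) = ⊥ := Submodule.finrank_eq_zero.mp (Nat.le_zero.mp hn)
    have : D = ⊥ := (LieSubmodule.toSubmodule_eq_bot D).mp hD
    exact absurd (this ▸ hID) (by simp)
  | succ n ih =>
    by_cases hmin : ∀ C : LieIdeal K L, I < C → C ≤ D → C = D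
    · exact ⟨D, le_rfl, hID, hmin⟩
    · push_neg at hmin
      obtain ⟨C, hIC, hCD, hne⟩ := hmin
      have hsub : (C : Submodule K L) < (D : Submodule K L) := by
        rw [lt_iff_le_and_ne]
        exact ⟨(LieSubmodule.toSubmodule_le_toSubmodule _ _).2 hCD,
          fun h => hne (LieSubmodule.toSubmodule_injective h)⟩
      have hrank : Module.finrank K (C : Submodule K L) ≤ n :=
        Nat.lt_succ_iff.mp (lt_of_lt_of_le (Submodule.finrank_lt_finrank_of_lt hsub) hn)
      obtain ⟨E, hE, h2⟩ := ih hIC hrank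
      exact ⟨E, hE.trans hCD, h2⟩

lemma chief_sup {A B I : LieIdeal K L} (hAB : IsChiefFactor K L A B)
    (hBI : B ≤ I) (hAI : A ⊓ I = B) (hnle : ¬ A ≤ I) :
    IsChiefFactor K L (A ⊔ I) I := by
  constructor
  · refine lt_of_le_of_ne le_sup_right fun h => hnle ?_
    rw [h]; exact le_sup_left
  · intro D hID hDle
    have hBD : B ≤ A ⊓ D := le_inf hAB.1.le (hBI.trans hID.le)
    by_cases h : B = A ⊓ D
    · exfalso
      have hmod : (I ⊔ A) ⊓ D = I ⊔ (A ⊓ D) := sup_inf_assoc_of_le _ hID.le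
      have hD : D = I ⊔ (A ⊓ D) := by
        rw [← hmod, sup_comm, inf_eq_right.mpr hDle]
      rw [← h, sup_eq_left.mpr hBI] at hD
      exact hID.ne' hD
    · have hA : A ⊓ D = A := hAB.2 _ (lt_of_le_of_ne hBD h) inf_le_left
      have hAD : A ≤ D := by rw [← hA]; exact inf_le_right
      exact le_antisymm hDle (sup_le hAD hID.le)

lemma ideal_sup_top {Z : LieIdeal K L} {X : LieSubalgebra K L}
    (hX : IsMaximalSubalgebra K L X) (h : ¬ (Z : Set L) ⊆ X) :
    (Z : Submodule K L) ⊔ (X : Submodule K L) = ⊤ := by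
  have h1 : asup Z X = ⊤ := by
    refine hX.2 _ (lt_of_le_of_ne (subalg_le_asup Z X) fun he => h ?_)
    intro x hx
    have hx2 : x ∈ asup Z X := Submodule.mem_sup_left hx
    rw [← he] at hx2; exact hx2
  have h2 := congrArg (fun T : LieSubalgebra K L => (T : Submodule K L)) h1
  simpa [asup_coe, LieSubalgebra.top_toSubmodule] using h2

lemma cent_eq {I X Y : LieIdeal K L} {M3 : LieSubalgebra K L}
    (hM3 : IsMaximalSubalgebra K L M3) (hcore : IsCoreOf K L I M3)
    (hX : IsChiefFactor K L X I) (hXna : ¬ FactorAbelian K L X I)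
    (hY : I < Y) (hXY : X ⊓ Y = I) : cent X I = Y := by
  have hIC : I ≤ cent X I := fun i hi a _ => lie_mem_left K L I i a hi
  have hYC : Y ≤ cent X I := by
    intro y hy a ha
    have h1 : ⁅y, a⁆ ∈ X ⊓ Y :=
      (LieSubmodule.mem_inf _ _ _).mpr ⟨X.lie_mem ha, lie_mem_left K L Y y a hy⟩
    rw [hXY] at h1; exact h1
  have hXM3 : ¬ (X : Set L) ⊆ M3 := fun h =>
    (hX.1.ne' (le_antisymm (hcore.2 X h) hX.1.le)).elim
  have topof : ∀ Z : LieIdeal K L, ¬ (Z : Set L) ⊆ M3 →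
      (Z : Submodule K L) ⊔ (M3 : Submodule K L) = ⊤ := by
    intro Z hZ
    have h1 : asup Z M3 = ⊤ := by
      refine hM3.2 _ (lt_of_le_of_ne (subalg_le_asup Z M3) fun h => hZ ?_)
      intro x hx
      have : x ∈ asup Z M3 := Submodule.mem_sup_left hx
      rw [← h] at this; exact this
    have := congrArg (fun T : LieSubalgebra K L => (T : Submodule K L)) h1
    simpa [asup_coe, LieSubalgebra.top_toSubmodule] using this
  have hXtop := topof X hXM3
  have hYM3 : ¬ (Y : Set L) ⊆ M3 := fun h => (hY.ne' (le_antisymm (hcore.2 Y h) hY.le)).elim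
  have hYtop := topof Y hYM3
  have hbr : ∀ a ∈ X, ∀ c ∈ cent X I, c ∈ M3 → ⁅a, c⁆ ∈ cent X I ∧ ⁅a, c⁆ ∈ M3 := by
    intro a ha c hc hcM
    have h1 : ⁅c, a⁆ ∈ I := hc a ha
    have h2 : ⁅a, c⁆ ∈ I := by rw [← lie_skew]; exact neg_mem h1
    exact ⟨hIC h2, hcore.1 h2⟩
  obtain ⟨CM, hCM⟩ := exists_inter_ideal (cent X I) X M3 hXtop hbr
  have hCMI : CM ≤ I := hcore.2 CM (fun x hx => ((hCM x).1 hx).2)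
  have hCX : cent X I ⊓ X = I := by
    refine le_antisymm ?_ (le_inf hIC hX.1.le)
    by_cases h : I = cent X I ⊓ X
    · exact h.ge
    · have h2 := hX.2 (cent X I ⊓ X) (lt_of_le_of_ne (le_inf hIC hX.1.le) h) inf_le_right
      exfalso
      apply hXna
      intro a ha a' ha'
      have hXle : X ≤ cent X I := inf_eq_right.mp h2
      exact hXle ha a' ha'
  have hfin : (cent X I : Submodule K L) ≤ (Y : Submodule K L) := by
    have hYle : (Y : Submodule K L) ≤ (cent X I : Submodule K L) :=
      (LieSubmodule.toSubmodule_le_toSubmodule _ _).2 hYC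
    have e1 : (cent X I : Submodule K L) =
        ((Y : Submodule K L) ⊔ (M3 : Submodule K L)) ⊓ (cent X I : Submodule K L) := by
      rw [hYtop, top_inf_eq]
    have e2 : ((Y : Submodule K L) ⊔ (M3 : Submodule K L)) ⊓ (cent X I : Submodule K L) =
        (Y : Submodule K L) ⊔ ((M3 : Submodule K L) ⊓ (cent X I : Submodule K L)) :=
      sup_inf_assoc_of_le _ hYle
    rw [e1, e2]
    refine sup_le le_rfl ?_
    intro x hx
    obtain ⟨hxM, hxC⟩ := Submodule.mem_inf.mp hx
    have : x ∈ CM := (hCM x).2 ⟨hxC, hxM⟩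
    exact (LieSubmodule.toSubmodule_le_toSubmodule _ _).2 (hCMI.trans hY.le) this
  exact le_antisymm ((LieSubmodule.toSubmodule_le_toSubmodule _ _).1 hfin) hYC

end Aux

variable {K : Type*} {L : Type*} [Field K] [LieRing L] [LieAlgebra K L]
variable [FiniteDimensional K L]

theorem stmt19 (A B : LieIdeal K L)
    (hAB : IsChiefFactor K L A B) (hna : ¬ FactorAbelian K L A B)
    (U S : LieSubalgebra K L) (UL SL : LieIdeal K L)
    (hU : IsMaximalSubalgebra K L U) (hS : IsMaximalSubalgebra K L S)
    (hUL : IsCoreOf K L UL U) (hSL : IsCoreOf K L SL S) (hne : UL ≠ SL)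
    (hUsupp : Supplements K L U A B) (hSsupp : Supplements K L S A B)
    (hU3 : ∃ J1 J2 : LieIdeal K L, QuotPrimitiveType3 K L UL J1 J2)
    (hSmono : QuotMonolithic K L SL) :
    UL < SL ∧
    (SL : Set L) = {x : L | ∀ a ∈ A, ⁅x, a⁆ ∈ B} ∧
    IsMaximalSubalgebra K L ((A : LieSubalgebra K L) ⊔ (U ⊓ S)) ∧
    IsCoreOf K L (A ⊔ UL) ((A : LieSubalgebra K L) ⊔ (U ⊓ S)) ∧
    (∃! J : LieIdeal K L, IsChiefFactor K L J (A ⊔ UL)) ∧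
    (∀ J : LieIdeal K L, IsChiefFactor K L J (A ⊔ UL) → ¬ FactorAbelian K L J (A ⊔ UL)) ∧
    IsChiefFactor K L SL UL ∧
    Supplements K L ((A : LieSubalgebra K L) ⊔ (U ⊓ S)) SL UL := by
  classical
  have hUtop : (A : Submodule K L) ⊔ (U : Submodule K L) = ⊤ := (sumIsTop_iff A U).1 hUsupp.1
  have hStop : (A : Submodule K L) ⊔ (S : Submodule K L) = ⊤ := (sumIsTop_iff A S).1 hSsupp.1
  have hBU : (B : Set L) ⊆ U := hUsupp.2.2
  have hBS : (B : Set L) ⊆ S := hSsupp.2.2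
  have hBUL : B ≤ UL := hUL.2 B hBU
  have hBSL : B ≤ SL := hSL.2 B hBS
  have hAnotU : ¬ (A : Set L) ⊆ U := by
    intro h
    apply hU.1
    apply subalg_top_of
    rw [eq_top_iff]
    intro x _
    have hx : x ∈ (A : Submodule K L) ⊔ (U : Submodule K L) := hUtop ▸ Submodule.mem_top
    obtain ⟨a, ha, m, hm, rfl⟩ := Submodule.mem_sup.mp hx
    exact add_mem (h ha) hm
  have hAnotS : ¬ (A : Set L) ⊆ S := by
    intro h
    apply hS.1
    apply subalg_top_of
    rw [eq_top_iff]
    intro x _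
    have hx : x ∈ (A : Submodule K L) ⊔ (S : Submodule K L) := hStop ▸ Submodule.mem_top
    obtain ⟨a, ha, m, hm, rfl⟩ := Submodule.mem_sup.mp hx
    exact add_mem (h ha) hm
  have hAinf : ∀ I : LieIdeal K L, B ≤ I → ¬ A ≤ I → A ⊓ I = B := by
    intro I hBI hnle
    by_cases h : B = A ⊓ I
    · exact h.symm
    · have h2 := hAB.2 (A ⊓ I) (lt_of_le_of_ne (le_inf hAB.1.le hBI) h) inf_le_left
      exact absurd (by rw [← h2]; exact inf_le_right) hnle
  have hAUL : ¬ A ≤ UL := fun h => hAnotU (fun x hx => hUL.1 (h hx))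
  have hASL : ¬ A ≤ SL := fun h => hAnotS (fun x hx => hSL.1 (h hx))
  have hAinfUL : A ⊓ UL = B := hAinf UL hBUL hAUL
  have hAinfSL : A ⊓ SL = B := hAinf SL hBSL hASL
  have hBC : B ≤ cent A B := fun b hb a _ => lie_mem_left K L B b a hb
  have hULC : UL ≤ cent A B := by
    intro x hx a ha
    have h1 : ⁅x, a⁆ ∈ A ⊓ UL :=
      (LieSubmodule.mem_inf _ _ _).mpr ⟨A.lie_mem ha, lie_mem_left K L UL x a hx⟩
    rw [hAinfUL] at h1; exact h1
  have hSLC : SL ≤ cent A B := by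
    intro x hx a ha
    have h1 : ⁅x, a⁆ ∈ A ⊓ SL :=
      (LieSubmodule.mem_inf _ _ _).mpr ⟨A.lie_mem ha, lie_mem_left K L SL x a hx⟩
    rw [hAinfSL] at h1; exact h1
  have hACB : ¬ A ≤ cent A B := by
    intro h
    apply hna
    intro a ha a' ha'
    exact h ha a' ha'
  have hbrU : ∀ a ∈ A, ∀ c ∈ cent A B, c ∈ U → ⁅a, c⁆ ∈ cent A B ∧ ⁅a, c⁆ ∈ U := by
    intro a ha c hc hcU
    have h1 : ⁅c, a⁆ ∈ B := hc a ha
    have h2 : ⁅a, c⁆ ∈ B := by rw [← lie_skew]; exact neg_mem h1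
    exact ⟨hBC h2, hBU h2⟩
  obtain ⟨CU, hCU⟩ := exists_inter_ideal (cent A B) A U hUtop hbrU
  have hCUle : CU ≤ UL := hUL.2 CU (fun x hx => ((hCU x).1 hx).2)
  have hCU_mem : ∀ x, x ∈ cent A B → x ∈ U → x ∈ UL := fun x h1 h2 => hCUle ((hCU x).2 ⟨h1, h2⟩)
  have hNchief : IsChiefFactor K L (A ⊔ SL) SL := chief_sup hAB hBSL hAinfSL hASL
  obtain ⟨J0, hJ0, hJ0uniq⟩ := hSmono
  have hCSL : cent A B = SL := by
    refine le_antisymm ?_ hSLC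
    by_contra hcon
    have hlt : SL < cent A B := lt_of_le_of_ne hSLC (fun h => hcon h.ge)
    obtain ⟨E, hEle, hEchief⟩ := exists_chief_le hlt
    have hNE : A ⊔ SL = E := (hJ0uniq _ hNchief).trans (hJ0uniq _ hEchief).symm
    exact hACB ((le_sup_left.trans hNE.le).trans hEle)
  have hULSL : UL < SL := lt_of_le_of_ne (hCSL ▸ hULC) hne
  have hconc2 : (SL : Set L) = {x : L | ∀ a ∈ A, ⁅x, a⁆ ∈ B} := by
    rw [← hCSL]; rfl
  have hULmem : ∀ x, x ∈ SL → x ∈ U → x ∈ UL := by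
    intro x h1 h2
    refine hCU_mem x ?_ h2
    rw [hCSL]; exact h1
  have hSLnotU : ¬ (SL : Set L) ⊆ U := by
    intro h
    have hle : SL ≤ UL := fun x hx => hULmem x hx (h hx)
    exact hULSL.not_ge hle
  have hSLUtop : (SL : Submodule K L) ⊔ (U : Submodule K L) = ⊤ :=
    ideal_sup_top hU hSLnotU
  have hUSsub : ((U ⊓ S : LieSubalgebra K L) : Submodule K L) =
      (U : Submodule K L) ⊓ (S : Submodule K L) := by
    ext x
    rw [LieSubalgebra.mem_toSubmodule, LieSubalgebra.mem_inf, Submodule.mem_inf]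
    rfl
  have hSdecomp : (S : Submodule K L) =
      (SL : Submodule K L) ⊔ ((U ⊓ S : LieSubalgebra K L) : Submodule K L) := by
    rw [hUSsub]
    have hSLS : (SL : Submodule K L) ≤ (S : Submodule K L) := fun x hx => hSL.1 hx
    calc (S : Submodule K L)
        = ((SL : Submodule K L) ⊔ (U : Submodule K L)) ⊓ (S : Submodule K L) := by
          rw [hSLUtop, top_inf_eq]
      _ = (SL : Submodule K L) ⊔ ((U : Submodule K L) ⊓ (S : Submodule K L)) :=
          sup_inf_assoc_of_le _ hSLS
  have hPchief : IsChiefFactor K L (A ⊔ UL) UL := chief_sup hAB hBUL hAinfUL hAUL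
  have hPna : ¬ FactorAbelian K L (A ⊔ UL) UL := by
    intro h
    apply hna
    intro a ha a' ha'
    have h1 : ⁅a, a'⁆ ∈ UL :=
      h a ((le_sup_left : A ≤ A ⊔ UL) ha) a' ((le_sup_left : A ≤ A ⊔ UL) ha')
    have h2 : ⁅a, a'⁆ ∈ A ⊓ UL := (LieSubmodule.mem_inf _ _ _).mpr ⟨A.lie_mem ha', h1⟩
    rw [hAinfUL] at h2; exact h2
  have hPSL : (A ⊔ UL) ⊓ SL = UL := by
    refine le_antisymm ?_ (le_inf le_sup_right hULSL.le)
    by_cases h : UL = (A ⊔ UL) ⊓ SL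
    · exact h.ge
    · have h2 := hPchief.2 _ (lt_of_le_of_ne (le_inf le_sup_right hULSL.le) h) inf_le_left
      exact absurd (le_sup_left.trans (inf_eq_left.mp h2)) hASL
  obtain ⟨E, hESL, hEchief⟩ := exists_chief_le hULSL
  have hEP : E ⊓ (A ⊔ UL) = UL := by
    refine le_antisymm ?_ (le_inf hEchief.1.le le_sup_right)
    by_cases h : UL = E ⊓ (A ⊔ UL)
    · exact h.ge
    · have h2 := hPchief.2 _ (lt_of_le_of_ne (le_inf hEchief.1.le le_sup_right) h) inf_le_right
      have h3 : A ⊔ UL ≤ E := by rw [← h2]; exact inf_le_left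
      have h4 : A ⊔ UL = E := hEchief.2 _ hPchief.1 h3
      exact absurd (le_sup_left.trans (h4 ▸ hESL)) hASL
  obtain ⟨J1, J2, hQP, hJ12, hJ1c, hJ2c, hJ1na, hJ2na, hJclass⟩ := hU3
  obtain ⟨M3, hM3max, hM3core⟩ := hQP
  have hcent1 : cent (A ⊔ UL) UL = E := by
    refine cent_eq hM3max hM3core hPchief hPna hEchief.1 ?_
    rw [inf_comm]; exact hEP
  have hSLE : SL ≤ cent (A ⊔ UL) UL := by
    intro s hs a ha
    obtain ⟨a1, ha1, u1, hu1, rfl⟩ := (LieSubmodule.mem_sup _ _ _).mp ha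
    rw [lie_add]
    refine add_mem ?_ (lie_mem_right K L UL s u1 hu1)
    have hs' : s ∈ cent A B := by rw [hCSL]; exact hs
    exact hBUL (hs' a1 ha1)
  have hSLeqE : SL = E := le_antisymm (by rw [← hcent1]; exact hSLE) hESL
  have hSLchief : IsChiefFactor K L SL UL := by rw [hSLeqE]; exact hEchief
  have hSLna : ¬ FactorAbelian K L SL UL := by
    rcases hJclass SL hSLchief with h | h
    · rw [h]; exact hJ1na
    · rw [h]; exact hJ2na
  have hcent2 : cent SL UL = A ⊔ UL := by
    refine cent_eq hM3max hM3core hSLchief hSLna hPchief.1 ?_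
    rw [inf_comm]; exact hPSL
  have hMsub : (((A : LieSubalgebra K L) ⊔ (U ⊓ S) : LieSubalgebra K L) : Submodule K L) =
      (A : Submodule K L) ⊔ ((U ⊓ S : LieSubalgebra K L) : Submodule K L) :=
    sup_ideal_coe A (U ⊓ S)
  have hMtop : (SL : Submodule K L) ⊔
      (((A : LieSubalgebra K L) ⊔ (U ⊓ S) : LieSubalgebra K L) : Submodule K L) = ⊤ := by
    rw [hMsub, sup_left_comm, ← hSdecomp, hStop]
  have hULset : (UL : Set L) ⊆ ((U ⊓ S : LieSubalgebra K L) : Set L) := by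
    intro x hx
    have hxU : x ∈ U := hUL.1 hx
    have hxS : x ∈ S := hSL.1 (hULSL.le hx)
    exact (LieSubalgebra.mem_inf _ _ x).mpr ⟨hxU, hxS⟩
  have hMne : (A : LieSubalgebra K L) ⊔ (U ⊓ S) ≠ ⊤ := by
    intro htop
    have hMsubtop : (A : Submodule K L) ⊔ ((U ⊓ S : LieSubalgebra K L) : Submodule K L) = ⊤ := by
      rw [← hMsub, htop, LieSubalgebra.top_toSubmodule]
    have hJ : ∃ J : LieIdeal K L, (J : Submodule K L) =
        ((A : Submodule K L) ⊓ (U : Submodule K L)) ⊔ (SL : Submodule K L) := by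
      refine ⟨{ toSubmodule := ((A : Submodule K L) ⊓ (U : Submodule K L)) ⊔ (SL : Submodule K L),
                lie_mem := ?_ }, rfl⟩
      intro y x hx
      have hy : y ∈ (SL : Submodule K L) ⊔ (U : Submodule K L) := hSLUtop ▸ Submodule.mem_top
      obtain ⟨s, hs, u, hu, rfl⟩ := Submodule.mem_sup.mp hy
      have hx' : x ∈ ((A : Submodule K L) ⊓ (U : Submodule K L)) ⊔ (SL : Submodule K L) := hx
      obtain ⟨w, hw, t, ht, rfl⟩ := Submodule.mem_sup.mp hx'
      show ⁅s + u, w + t⁆ ∈ ((A : Submodule K L) ⊓ (U : Submodule K L)) ⊔ (SL : Submodule K L)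
      rw [add_lie, lie_add, lie_add]
      refine add_mem (add_mem ?_ ?_) (add_mem ?_ ?_)
      · exact Submodule.mem_sup_right (lie_mem_left K L SL s w hs)
      · exact Submodule.mem_sup_right (lie_mem_left K L SL s t hs)
      · obtain ⟨hwA, hwU⟩ := Submodule.mem_inf.mp hw
        exact Submodule.mem_sup_left (Submodule.mem_inf.mpr ⟨A.lie_mem hwA, U.lie_mem' hu hwU⟩)
      · exact Submodule.mem_sup_right (lie_mem_right K L SL u t ht)
    obtain ⟨J, hJsub⟩ := hJ
    have hSLJ : SL ≤ J := by
      have h1 : (SL : Submodule K L) ≤ (J : Submodule K L) := by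
        rw [hJsub]; exact le_sup_right
      exact (LieSubmodule.toSubmodule_le_toSubmodule _ _).1 h1
    have hUdec : (U : Submodule K L) = ((U ⊓ S : LieSubalgebra K L) : Submodule K L) ⊔
        ((A : Submodule K L) ⊓ (U : Submodule K L)) := by
      have hle : ((U ⊓ S : LieSubalgebra K L) : Submodule K L) ≤ (U : Submodule K L) := by
        rw [hUSsub]; exact inf_le_left
      calc (U : Submodule K L)
          = (((U ⊓ S : LieSubalgebra K L) : Submodule K L) ⊔ (A : Submodule K L)) ⊓
              (U : Submodule K L) := by rw [sup_comm, hMsubtop, top_inf_eq]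
        _ = _ := sup_inf_assoc_of_le _ hle
    have hJS_top : (J : Submodule K L) ⊔ (S : Submodule K L) = ⊤ := by
      rw [eq_top_iff]
      intro x _
      have hx : x ∈ (SL : Submodule K L) ⊔ (U : Submodule K L) := hSLUtop ▸ Submodule.mem_top
      obtain ⟨s, hs, u, hu, rfl⟩ := Submodule.mem_sup.mp hx
      refine add_mem (Submodule.mem_sup_left ?_) ?_
      · rw [hJsub]; exact Submodule.mem_sup_right hs
      · rw [hUdec] at hu
        obtain ⟨w, hw, t, ht, rfl⟩ := Submodule.mem_sup.mp hu
        refine add_mem (Submodule.mem_sup_right ?_) (Submodule.mem_sup_left ?_)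
        · rw [hUSsub] at hw
          exact (Submodule.mem_inf.mp hw).2
        · rw [hJsub]; exact Submodule.mem_sup_left ht
    have hJnotSL : ¬ J ≤ SL := by
      intro h
      apply hS.1
      apply subalg_top_of
      rw [eq_top_iff]
      intro x _
      have hx : x ∈ (J : Submodule K L) ⊔ (S : Submodule K L) := hJS_top ▸ Submodule.mem_top
      obtain ⟨j, hj, s, hs, rfl⟩ := Submodule.mem_sup.mp hx
      exact add_mem (show j ∈ (S : Submodule K L) from hSL.1 (h hj)) hs
    have hSLJlt : SL < J := lt_of_le_of_ne hSLJ (fun h => hJnotSL h.ge)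
    obtain ⟨E', hE'J, hE'chief⟩ := exists_chief_le hSLJlt
    have hNE' : A ⊔ SL = E' := (hJ0uniq _ hNchief).trans (hJ0uniq _ hE'chief).symm
    have hAJ : A ≤ J := (le_sup_left.trans hNE'.le).trans hE'J
    have h1 : (A : Submodule K L) ≤
        ((A : Submodule K L) ⊓ (U : Submodule K L)) ⊔ (SL : Submodule K L) := by
      rw [← hJsub]; exact (LieSubmodule.toSubmodule_le_toSubmodule _ _).2 hAJ
    have h2 : (((A : Submodule K L) ⊓ (U : Submodule K L)) ⊔ (SL : Submodule K L)) ⊓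
        (A : Submodule K L) = (A : Submodule K L) := inf_eq_right.mpr h1
    have h3 : (((A : Submodule K L) ⊓ (U : Submodule K L)) ⊔ (SL : Submodule K L)) ⊓
        (A : Submodule K L) = ((A : Submodule K L) ⊓ (U : Submodule K L)) ⊔
        ((SL : Submodule K L) ⊓ (A : Submodule K L)) :=
      sup_inf_assoc_of_le _ inf_le_left
    have hSLA : (SL : Submodule K L) ⊓ (A : Submodule K L) = (B : Submodule K L) := by
      have h4 := congrArg (fun I : LieIdeal K L => (I : Submodule K L)) hAinfSL
      rw [inf_comm]; exact h4
    apply hAnotU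
    intro x hx
    have hx2 : x ∈ ((A : Submodule K L) ⊓ (U : Submodule K L)) ⊔ (B : Submodule K L) := by
      rw [← hSLA, ← h3, h2]; exact hx
    obtain ⟨w, hw, b, hb, rfl⟩ := Submodule.mem_sup.mp hx2
    exact add_mem ((Submodule.mem_inf.mp hw).2) (show b ∈ (U : Submodule K L) from hBU hb)
  have hstep : ∀ X : LieSubalgebra K L, U ⊓ S ≤ X → X ≤ U → X = U ⊓ S ∨ X = U := by
    intro X hUSX hXU
    by_cases hXS : (X : Set L) ⊆ S
    · left
      exact le_antisymm (le_inf hXU (fun x hx => hXS hx)) hUSX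
    · right
      have hSY : S ≤ asup SL X := by
        intro s hs
        have hs' : s ∈ (SL : Submodule K L) ⊔ ((U ⊓ S : LieSubalgebra K L) : Submodule K L) := by
          rw [← hSdecomp]; exact hs
        obtain ⟨sl, hsl, w, hw, rfl⟩ := Submodule.mem_sup.mp hs'
        exact mem_asup.mpr ⟨sl, hsl, w, hUSX hw, rfl⟩
      have hYtop : asup SL X = ⊤ := by
        refine hS.2 _ (lt_of_le_of_ne hSY ?_)
        intro h
        obtain ⟨x, hxX, hxS⟩ := Set.not_subset.mp hXS
        have : x ∈ S := by rw [h]; exact subalg_le_asup SL X hxX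
        exact hxS this
      have hXtopsub : (SL : Submodule K L) ⊔ (X : Submodule K L) = ⊤ := by
        have h5 := congrArg (fun T : LieSubalgebra K L => (T : Submodule K L)) hYtop
        simpa [asup_coe, LieSubalgebra.top_toSubmodule] using h5
      have hXUsub : (X : Submodule K L) ≤ (U : Submodule K L) := fun x hx => hXU hx
      have hUX : (U : Submodule K L) ≤ (X : Submodule K L) := by
        calc (U : Submodule K L)
            = ((X : Submodule K L) ⊔ (SL : Submodule K L)) ⊓ (U : Submodule K L) := by
              rw [sup_comm, hXtopsub, top_inf_eq]
          _ = (X : Submodule K L) ⊔ ((SL : Submodule K L) ⊓ (U : Submodule K L)) :=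
              sup_inf_assoc_of_le _ hXUsub
          _ ≤ (X : Submodule K L) := by
              refine sup_le le_rfl ?_
              intro x hx
              obtain ⟨h1, h2⟩ := Submodule.mem_inf.mp hx
              exact hUSX (hULset (hULmem x h1 h2))
      exact le_antisymm hXU (fun x hx => hUX hx)
  have hMmax : ∀ V : LieSubalgebra K L, (A : LieSubalgebra K L) ⊔ (U ⊓ S) < V → V = ⊤ := by
    intro V hMV
    have hAV : (A : Submodule K L) ≤ (V : Submodule K L) := by
      intro x hx
      exact hMV.le ((le_sup_left : (A : LieSubalgebra K L) ≤ _) hx)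
    rcases hstep (V ⊓ U) (le_inf (le_sup_right.trans hMV.le) inf_le_left) inf_le_right with h | h
    · exfalso
      have hVUsub : ((V ⊓ U : LieSubalgebra K L) : Submodule K L) =
          (V : Submodule K L) ⊓ (U : Submodule K L) := by
        ext x
        rw [LieSubalgebra.mem_toSubmodule, LieSubalgebra.mem_inf, Submodule.mem_inf]
        rfl
      have hVM : (V : Submodule K L) =
          (((A : LieSubalgebra K L) ⊔ (U ⊓ S) : LieSubalgebra K L) : Submodule K L) := by
        rw [hMsub]
        calc (V : Submodule K L)
            = ((A : Submodule K L) ⊔ (U : Submodule K L)) ⊓ (V : Submodule K L) := by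
              rw [hUtop, top_inf_eq]
          _ = (A : Submodule K L) ⊔ ((U : Submodule K L) ⊓ (V : Submodule K L)) :=
              sup_inf_assoc_of_le _ hAV
          _ = (A : Submodule K L) ⊔ ((U ⊓ S : LieSubalgebra K L) : Submodule K L) := by
              rw [inf_comm, ← hVUsub, h]
      exact hMV.ne' ((LieSubalgebra.toSubmodule_inj _ _).1 hVM)
    · have hUV : (U : Submodule K L) ≤ (V : Submodule K L) := by
        intro x hx
        have : x ∈ V ⊓ U := by rw [h]; exact hx
        exact ((LieSubalgebra.mem_inf _ _ x).mp this).1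
      apply subalg_top_of
      rw [eq_top_iff]
      intro x _
      have hx : x ∈ (A : Submodule K L) ⊔ (U : Submodule K L) := hUtop ▸ Submodule.mem_top
      obtain ⟨a, ha, u, hu, rfl⟩ := Submodule.mem_sup.mp hx
      exact add_mem (hAV ha) (hUV hu)
  have hPMset : ((A ⊔ UL : LieIdeal K L) : Set L) ⊆
      (((A : LieSubalgebra K L) ⊔ (U ⊓ S) : LieSubalgebra K L) : Set L) := by
    intro x hx
    obtain ⟨a, ha, u, hu, rfl⟩ := (LieSubmodule.mem_sup _ _ _).mp hx
    refine add_mem ?_ ?_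
    · exact (le_sup_left : (A : LieSubalgebra K L) ≤ _) ha
    · exact (le_sup_right : U ⊓ S ≤ _) (hULset hu)
  have hMcore : IsCoreOf K L (A ⊔ UL) ((A : LieSubalgebra K L) ⊔ (U ⊓ S)) := by
    refine ⟨hPMset, ?_⟩
    intro J hJM
    have hDSL : (J ⊔ UL) ⊓ SL = UL := by
      refine le_antisymm ?_ (le_inf le_sup_right hULSL.le)
      by_cases h : UL = (J ⊔ UL) ⊓ SL
      · exact h.ge
      · have h2 := hSLchief.2 _ (lt_of_le_of_ne (le_inf le_sup_right hULSL.le) h) inf_le_right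
        have hSLle : SL ≤ J ⊔ UL := by rw [← h2]; exact inf_le_left
        exfalso
        apply hMne
        apply subalg_top_of
        rw [eq_top_iff]
        intro x _
        have hx : x ∈ (SL : Submodule K L) ⊔
            (((A : LieSubalgebra K L) ⊔ (U ⊓ S) : LieSubalgebra K L) : Submodule K L) :=
          hMtop ▸ Submodule.mem_top
        obtain ⟨s, hs, m, hm, rfl⟩ := Submodule.mem_sup.mp hx
        refine add_mem ?_ hm
        obtain ⟨j, hj, u, hu, rfl⟩ := (LieSubmodule.mem_sup _ _ _).mp (hSLle hs)
        refine add_mem ?_ ?_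
        · exact hJM hj
        · exact (le_sup_right : U ⊓ S ≤ _) (hULset hu)
    have hJP : J ⊔ UL ≤ cent SL UL := by
      intro d hd s hs
      have h1 : ⁅d, s⁆ ∈ (J ⊔ UL) ⊓ SL :=
        (LieSubmodule.mem_inf _ _ _).mpr ⟨lie_mem_left K L _ d s hd, SL.lie_mem hs⟩
      rw [hDSL] at h1; exact h1
    rw [hcent2] at hJP
    exact le_sup_left.trans hJP
  have hSLnotP : ¬ SL ≤ A ⊔ UL := by
    intro h
    have : SL ≤ UL := by
      have := le_inf h (le_refl SL)
      rw [inf_comm] at hPSL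
      rw [← hPSL]; exact le_inf le_rfl h
    exact hULSL.not_ge this
  have hSLP : SL ⊓ (A ⊔ UL) = UL := by rw [inf_comm]; exact hPSL
  have hN'chief : IsChiefFactor K L ((A ⊔ UL) ⊔ SL) (A ⊔ UL) := by
    have h := chief_sup hSLchief (le_sup_right : UL ≤ A ⊔ UL) hSLP hSLnotP
    rw [sup_comm] at h
    exact h
  have hMono : ∃! J' : LieIdeal K L, IsChiefFactor K L J' (A ⊔ UL) := by
    refine ⟨(A ⊔ UL) ⊔ SL, hN'chief, ?_⟩
    intro D hD
    by_cases h : UL = D ⊓ SL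
    · exfalso
      have hDC : D ≤ cent SL UL := by
        intro d hd s hs
        have h1 : ⁅d, s⁆ ∈ D ⊓ SL :=
          (LieSubmodule.mem_inf _ _ _).mpr ⟨lie_mem_left K L _ d s hd, SL.lie_mem hs⟩
        rw [← h] at h1; exact h1
      rw [hcent2] at hDC
      exact hD.1.not_ge hDC
    · have hULD : UL ≤ D ⊓ SL := le_inf (le_sup_right.trans hD.1.le) hULSL.le
      have h2 := hSLchief.2 _ (lt_of_le_of_ne hULD h) inf_le_right
      have hSLD : SL ≤ D := by rw [← h2]; exact inf_le_left
      have h3 : (A ⊔ UL) ⊔ SL ≤ D := sup_le hD.1.le hSLD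
      exact (hD.2 _ hN'chief.1 h3).symm
  have hMnonab : ∀ J' : LieIdeal K L, IsChiefFactor K L J' (A ⊔ UL) →
      ¬ FactorAbelian K L J' (A ⊔ UL) := by
    intro J' hJ' hab
    obtain ⟨W, hW, hWuniq⟩ := hMono
    have hJ'N : J' = (A ⊔ UL) ⊔ SL := (hWuniq _ hJ').trans (hWuniq _ hN'chief).symm
    apply hSLna
    intro s hs s' hs'
    have h1 : ⁅s, s'⁆ ∈ A ⊔ UL := by
      refine hab s ?_ s' ?_
      · rw [hJ'N]; exact (le_sup_right : SL ≤ _) hs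
      · rw [hJ'N]; exact (le_sup_right : SL ≤ _) hs'
    have h2 : ⁅s, s'⁆ ∈ (A ⊔ UL) ⊓ SL :=
      (LieSubmodule.mem_inf _ _ _).mpr ⟨h1, lie_mem_left K L SL s s' hs⟩
    rw [hPSL] at h2; exact h2
  have hMsupp : Supplements K L ((A : LieSubalgebra K L) ⊔ (U ⊓ S)) SL UL := by
    refine ⟨(sumIsTop_iff SL _).2 hMtop, hULSL.le, ?_⟩
    intro x hx
    exact (le_sup_right : U ⊓ S ≤ _) (hULset hx)
  exact ⟨hULSL, hconc2, ⟨hMne, hMmax⟩, hMcore, hMono, hMnonab, hSLchief, hMsupp⟩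
end
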